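/- arXiv:1410.1518 — 3 statements merged into one kernel-verified Lean document; each statement's English description precedes it below -/
import Mathlib

section
/- Under the general setup, assume the family {U_n}_{n∈ℕ} of random variables is weakly relatively compact (tight) and the coherency condition holds. Then for every t ∈ ℝ^m one has lim_{n→∞} |f_n(t) − g_n(t)| = 0, where f_n is the characteristic function of Z_n and g_n(t) = E[h(U_n t)·exp(i⟨t, V_n⟩)]. -/
open MeasureTheory ProbabilityTheory Filter Topology
open scoped RealInnerProductSpace

/-- The characteristic function of an `ℝ^m`-valued random vector `X`
on a probability space `(Ω, P)`, evaluated at `t`. -/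
noncomputable def charFn {Ω : Type*} [MeasurableSpace Ω] (P : Measure Ω) {m : ℕ}
    (X : Ω → EuclideanSpace ℝ (Fin m)) (t : EuclideanSpace ℝ (Fin m)) : ℂ :=
  ∫ ω, Complex.exp ((⟪t, X ω⟫ : ℝ) * Complex.I) ∂P

section aux

variable {Ω : Type*} [MeasurableSpace Ω] (P : Measure Ω) [IsProbabilityMeasure P] {m : ℕ}

lemma exp_inner_meas {X : Ω → EuclideanSpace ℝ (Fin m)} (hX : Measurable X)
    (s : EuclideanSpace ℝ (Fin m)) :
    Measurable (fun ω => Complex.exp ((⟪s, X ω⟫ : ℝ) * Complex.I)) :=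
  Complex.measurable_exp.comp
    ((Complex.measurable_ofReal.comp (measurable_const.inner hX)).mul_const _)

lemma abs_exp_I (r : ℝ) : ‖Complex.exp ((r : ℂ) * Complex.I)‖ = 1 := by
  simp [Complex.norm_exp]

lemma integrable_exp_inner {X : Ω → EuclideanSpace ℝ (Fin m)} (hX : Measurable X)
    (s : EuclideanSpace ℝ (Fin m)) :
    Integrable (fun ω => Complex.exp ((⟪s, X ω⟫ : ℝ) * Complex.I)) P :=
  ⟨(exp_inner_meas hX s).aestronglyMeasurable,
    HasFiniteIntegral.of_bounded (C := 1) (ae_of_all _ fun ω => le_of_eq (abs_exp_I _))⟩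

lemma abs_charFn_le {X : Ω → EuclideanSpace ℝ (Fin m)}
    (s : EuclideanSpace ℝ (Fin m)) : ‖(charFn P X s)‖ ≤ 1 := by
  rw [charFn]
  calc ‖∫ ω, Complex.exp ((⟪s, X ω⟫ : ℝ) * Complex.I) ∂P‖
      ≤ 1 * (P Set.univ).toReal :=
        norm_integral_le_of_norm_le_const (ae_of_all _ fun ω => le_of_eq (abs_exp_I _))
    _ = 1 := by simp

lemma fiber_indep {E : Type*} [MeasurableSpace E] {N : Ω → ℕ} {X : Ω → E}
    (hN : Measurable N) (hX : Measurable X) (hind : IndepFun N X P) (k : ℕ)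
    {φ : E → ℂ} (hφ : Measurable φ) :
    ∫ ω in N ⁻¹' {k}, φ (X ω) ∂P = (P (N ⁻¹' {k})).toReal • ∫ ω, φ (X ω) ∂P := by
  have hmeq : (P.restrict (N ⁻¹' {k})).map X = (P (N ⁻¹' {k})) • P.map X := by
    ext B hB
    rw [Measure.map_apply hX hB, Measure.restrict_apply (hX hB), Measure.smul_apply,
      Measure.map_apply hX hB, smul_eq_mul, Set.inter_comm]
    exact hind.measure_inter_preimage_eq_mul _ _ (measurableSet_singleton k) hB
  have h1 : ∫ ω in N ⁻¹' {k}, φ (X ω) ∂P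
      = ∫ x, φ x ∂((P.restrict (N ⁻¹' {k})).map X) :=
    (integral_map hX.aemeasurable hφ.aestronglyMeasurable).symm
  rw [h1, hmeq, integral_smul_measure, integral_map hX.aemeasurable hφ.aestronglyMeasurable]

end aux

section key
variable {Ω : Type*} [MeasurableSpace Ω] (P : Measure Ω) [IsProbabilityMeasure P] {m : ℕ}

set_option maxHeartbeats 1000000 in
lemma key_identity
    (W : ℕ → Ω → EuclideanSpace ℝ (Fin m)) (hW : ∀ k, Measurable (W k))
    (N : Ω → ℕ) (hN : Measurable N)
    (hind : ∀ k, IndepFun N (W k) P)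
    (u : ℕ → ℝ) (v : ℕ → EuclideanSpace ℝ (Fin m)) (t : EuclideanSpace ℝ (Fin m)) :
    ∫ ω, Complex.exp ((⟪u (N ω) • t, W (N ω) ω⟫ : ℝ) * Complex.I) *
        Complex.exp ((⟪t, v (N ω)⟫ : ℝ) * Complex.I) ∂P
    = ∫ ω, charFn P (W (N ω)) (u (N ω) • t) *
        Complex.exp ((⟪t, v (N ω)⟫ : ℝ) * Complex.I) ∂P := by
  classical
  set A : ℕ → Set Ω := fun k => N ⁻¹' {k} with hAdef
  have hAmeas : ∀ k, MeasurableSet (A k) := fun k => hN (measurableSet_singleton k)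
  have hdisj : Pairwise (Function.onFun Disjoint A) := fun i j hij =>
    Disjoint.preimage N (Set.disjoint_singleton.mpr hij)
  have hunion : (⋃ k, A k) = Set.univ := by
    ext ω; simp [hAdef]
  -- the two integrands
  set F1 : Ω → ℂ := fun ω => Complex.exp ((⟪u (N ω) • t, W (N ω) ω⟫ : ℝ) * Complex.I) *
      Complex.exp ((⟪t, v (N ω)⟫ : ℝ) * Complex.I) with hF1def
  set G : ℕ → ℂ := fun k => charFn P (W k) (u k • t) *
      Complex.exp ((⟪t, v k⟫ : ℝ) * Complex.I) with hGdef
  have hφmeas : Measurable (fun p : Ω × ℕ =>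
      Complex.exp ((⟪u p.2 • t, W p.2 p.1⟫ : ℝ) * Complex.I) *
      Complex.exp ((⟪t, v p.2⟫ : ℝ) * Complex.I)) := by
    refine measurable_from_prod_countable_left fun k => ?_
    simpa using (exp_inner_meas (hW k) (u k • t)).mul_const
      (Complex.exp ((⟪t, v k⟫ : ℝ) * Complex.I))
  have hF1meas : Measurable F1 := by
    have hcomp := hφmeas.comp (f := fun ω : Ω => (ω, N ω)) (measurable_id.prodMk hN)
    exact hcomp
  have hF1int : Integrable F1 P := by
    refine ⟨hF1meas.aestronglyMeasurable,
      HasFiniteIntegral.of_bounded (C := 1) (ae_of_all _ fun ω => ?_)⟩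
    rw [hF1def]
    simp only [norm_mul, abs_exp_I, mul_one, le_refl]
  have hF2meas : Measurable (fun ω => G (N ω)) :=
    Measurable.comp (measurable_from_nat (f := G)) hN
  have hF2int : Integrable (fun ω => G (N ω)) P := by
    refine ⟨hF2meas.aestronglyMeasurable,
      HasFiniteIntegral.of_bounded (C := 1) (ae_of_all _ fun ω => ?_)⟩
    simp only [hGdef, norm_mul, abs_exp_I, mul_one]
    exact abs_charFn_le P _
  have key : ∀ k, ∫ ω in A k, F1 ω ∂P = (P (A k)).toReal • G k := by
    intro k
    have h1 : ∫ ω in A k, F1 ω ∂P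
        = ∫ ω in A k, (fun x : EuclideanSpace ℝ (Fin m) =>
            Complex.exp ((⟪u k • t, x⟫ : ℝ) * Complex.I)) (W k ω) *
            Complex.exp ((⟪t, v k⟫ : ℝ) * Complex.I) ∂P := by
      refine setIntegral_congr_fun (hAmeas k) (fun ω hω => ?_)
      have hk : N ω = k := hω
      simp only [hF1def, hk]
    have hφk : Measurable (fun x : EuclideanSpace ℝ (Fin m) =>
        Complex.exp ((⟪u k • t, x⟫ : ℝ) * Complex.I)) :=
      Complex.measurable_exp.comp
        ((Complex.measurable_ofReal.comp (measurable_const.inner measurable_id)).mul_const _)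
    rw [h1, integral_mul_const, fiber_indep P hN (hW k) (hind k) k hφk]
    have : (∫ ω, Complex.exp ((⟪u k • t, W k ω⟫ : ℝ) * Complex.I) ∂P)
        = charFn P (W k) (u k • t) := rfl
    rw [this, smul_mul_assoc, hGdef]
  calc ∫ ω, F1 ω ∂P = ∫ ω in ⋃ k, A k, F1 ω ∂P := by rw [hunion, setIntegral_univ]
    _ = ∑' k, ∫ ω in A k, F1 ω ∂P :=
        integral_iUnion hAmeas hdisj (hunion ▸ hF1int.integrableOn)
    _ = ∑' k, (P (A k)).toReal • G k := tsum_congr key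
    _ = ∑' k, ∫ ω in A k, G (N ω) ∂P := by
        refine tsum_congr fun k => ?_
        have heq : ∫ ω in A k, G (N ω) ∂P = ∫ _ω in A k, G k ∂P :=
          setIntegral_congr_fun (hAmeas k) (fun ω hω => by
            have hk : N ω = k := hω
            rw [hk])
        rw [heq, setIntegral_const]; rfl
    _ = ∫ ω in ⋃ k, A k, G (N ω) ∂P :=
        (integral_iUnion hAmeas hdisj (hunion ▸ hF2int.integrableOn)).symm
    _ = ∫ ω, G (N ω) ∂P := by rw [hunion, setIntegral_univ]

end key

set_option maxHeartbeats 2000000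

/-- **Lemma 1**: under tightness of `{Uₙ}` and the coherency condition, for every `t ∈ ℝ^m`
one has `|fₙ(t) − gₙ(t)| → 0`, where `fₙ` is the characteristic function of
`Zₙ = dₙ⁻¹ (S_{n,Nₙ} − cₙ)` and `gₙ(t) = E[h(Uₙ t) exp(i⟨t, Vₙ⟩)]`. -/
theorem lemma1_rapprochement
    {Ω : Type*} [MeasurableSpace Ω] (P : Measure Ω) [IsProbabilityMeasure P]
    (m : ℕ)
    -- the double array S_{n,k} and its measurability
    (S : ℕ → ℕ → Ω → EuclideanSpace ℝ (Fin m))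
    (hSmeas : ∀ n k, Measurable (S n k))
    -- non-random centering vectors and positive scaling constants
    (a : ℕ → ℕ → EuclideanSpace ℝ (Fin m)) (b : ℕ → ℕ → ℝ) (hb : ∀ n k, 0 < b n k)
    -- the random sample sizes, positive, measurable, independent of each S_{n,k}
    (N : ℕ → Ω → ℕ) (hNmeas : ∀ n, Measurable (N n)) (hNpos : ∀ n ω, 0 < N n ω)
    (hNindep : ∀ n k, IndepFun (N n) (S n k) P)
    -- non-random vectors cₙ and positive constants dₙ
    (c : ℕ → EuclideanSpace ℝ (Fin m)) (d : ℕ → ℝ) (hd : ∀ n, 0 < d n)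
    -- Y_{n,k} = b_{n,k}⁻¹ (S_{n,k} − a_{n,k})
    (Y : ℕ → ℕ → Ω → EuclideanSpace ℝ (Fin m))
    (hY : ∀ n k ω, Y n k ω = (b n k)⁻¹ • (S n k ω - a n k))
    -- Z_n = d_n⁻¹ (S_{n,N_n} − c_n)
    (Z : ℕ → Ω → EuclideanSpace ℝ (Fin m))
    (hZ : ∀ n ω, Z n ω = (d n)⁻¹ • (S n (N n ω) ω - c n))
    -- U_n = d_n⁻¹ b_{n,N_n},  V_n = d_n⁻¹ (a_{n,N_n} − c_n)
    (U : ℕ → Ω → ℝ) (hU : ∀ n ω, U n ω = (d n)⁻¹ * b n (N n ω))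
    (V : ℕ → Ω → EuclideanSpace ℝ (Fin m))
    (hV : ∀ n ω, V n ω = (d n)⁻¹ • (a n (N n ω) - c n))
    -- the limit random vector Y with characteristic function h
    (Ylim : Ω → EuclideanSpace ℝ (Fin m)) (hYlim : Measurable Ylim)
    (h : EuclideanSpace ℝ (Fin m) → ℂ) (hh : ∀ t, h t = charFn P Ylim t)
    -- weak relative compactness (tightness) of the family {U_n}
    (htight : Tendsto (fun R : ℝ => ⨆ n, P {ω | R < |U n ω|}) atTop (𝓝 0))
    -- coherency condition: for every T > 0,
    -- E[ sup_{‖t‖ ≤ T} |h_{n,N_n}(t) − h(t)| ] → 0 as n → ∞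
    (hcoh : ∀ T : ℝ, 0 < T →
      Tendsto (fun n => ∫ ω,
          ⨆ t ∈ Metric.closedBall (0 : EuclideanSpace ℝ (Fin m)) T,
            ‖(charFn P (Y n (N n ω)) t - h t)‖ ∂P)
        atTop (𝓝 0)) :
    -- conclusion: for every t, |fₙ(t) − gₙ(t)| → 0
    ∀ t : EuclideanSpace ℝ (Fin m),
      Tendsto (fun n =>
          ‖(charFn P (Z n) t -
            ∫ ω, h ((U n ω) • t) * Complex.exp ((⟪t, V n ω⟫ : ℝ) * Complex.I) ∂P)‖)
        atTop (𝓝 0) := by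
  intro t
  -- measurability facts
  have hYmeas : ∀ n k, Measurable (Y n k) := by
    intro n k
    have hfe : Y n k = fun ω => (b n k)⁻¹ • (S n k ω - a n k) := funext (hY n k)
    rw [hfe]
    fun_prop
  have hindY : ∀ n k, IndepFun (N n) (Y n k) P := by
    intro n k
    have hψ : Measurable (fun x : EuclideanSpace ℝ (Fin m) => (b n k)⁻¹ • (x - a n k)) :=
      by fun_prop
    have h2 := (hNindep n k).comp measurable_id hψ
    have hfe : (fun x : EuclideanSpace ℝ (Fin m) => (b n k)⁻¹ • (x - a n k)) ∘ (S n k)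
        = Y n k := funext fun ω => (hY n k ω).symm
    rwa [Function.id_comp, hfe] at h2
  have hUmeas : ∀ n, Measurable (U n) := by
    intro n
    have hfe : U n = (fun k => (d n)⁻¹ * b n k) ∘ (N n) := funext fun ω => hU n ω
    rw [hfe]
    exact (measurable_from_nat (f := fun k => (d n)⁻¹ * b n k)).comp (hNmeas n)
  -- bound on |charFn - h|
  have habs2 : ∀ (X : Ω → EuclideanSpace ℝ (Fin m)) (s : EuclideanSpace ℝ (Fin m)),
      ‖(charFn P X s - h s)‖ ≤ 2 := by
    intro X s
    calc ‖charFn P X s - h s‖ ≤ ‖charFn P X s‖ + ‖h s‖ := norm_sub_le _ _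
      _ ≤ 1 + 1 := by
          rw [hh s]
          exact add_le_add (abs_charFn_le P _) (abs_charFn_le P _)
      _ = 2 := by norm_num
  -- integrability helper
  have hqint : ∀ (n : ℕ) (q : ℕ → ℂ), (∀ k, ‖q k‖ ≤ 2) →
      Integrable (fun ω => q (N n ω)) P := fun n q hq2 =>
    ⟨((measurable_from_nat (f := q)).comp (hNmeas n)).aestronglyMeasurable,
      HasFiniteIntegral.of_bounded (C := 2) (ae_of_all _ fun ω => hq2 _)⟩
  have hqintR : ∀ (n : ℕ) (q : ℕ → ℝ), (∀ k, ‖q k‖ ≤ 2) →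
      Integrable (fun ω => q (N n ω)) P := fun n q hq2 =>
    ⟨((measurable_from_nat (f := q)).comp (hNmeas n)).aestronglyMeasurable,
      HasFiniteIntegral.of_bounded (C := 2) (ae_of_all _ fun ω => hq2 _)⟩
  -- Step 1 : the identity f_n(t) = E[h_{n,N_n}(U_n t) e^{i⟨t,V_n⟩}]
  have hid : ∀ n, charFn P (Z n) t
      = ∫ ω, charFn P (Y n (N n ω)) ((U n ω) • t) *
          Complex.exp ((⟪t, V n ω⟫ : ℝ) * Complex.I) ∂P := by
    intro n
    have hZsplit : ∀ ω, (⟪t, Z n ω⟫ : ℝ)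
        = ⟪((d n)⁻¹ * b n (N n ω)) • t, Y n (N n ω) ω⟫
          + ⟪t, (d n)⁻¹ • (a n (N n ω) - c n)⟫ := by
      intro ω
      have hb' : b n (N n ω) ≠ 0 := (hb n (N n ω)).ne'
      have hZω : Z n ω = ((d n)⁻¹ * b n (N n ω)) • Y n (N n ω) ω
          + (d n)⁻¹ • (a n (N n ω) - c n) := by
        rw [hZ, hY, smul_smul, mul_assoc, mul_inv_cancel₀ hb', mul_one, ← smul_add,
          sub_add_sub_cancel]
      rw [hZω, inner_add_right, real_inner_smul_right, ← real_inner_smul_left]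
    have h1 : charFn P (Z n) t
        = ∫ ω, Complex.exp ((⟪((d n)⁻¹ * b n (N n ω)) • t, Y n (N n ω) ω⟫ : ℝ) * Complex.I) *
            Complex.exp ((⟪t, (d n)⁻¹ • (a n (N n ω) - c n)⟫ : ℝ) * Complex.I) ∂P := by
      rw [charFn]
      congr 1
      funext ω
      rw [hZsplit ω, Complex.ofReal_add, add_mul, Complex.exp_add]
    have hkey := key_identity P (Y n) (hYmeas n) (N n) (hNmeas n) (hindY n)
      (fun k => (d n)⁻¹ * b n k) (fun k => (d n)⁻¹ • (a n k - c n)) t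
    beta_reduce at hkey
    rw [h1, hkey]
    congr 1
    funext ω
    rw [hU, hV]
  -- Step 2 : |f_n(t) - g_n(t)| ≤ ∫ |h_{n,N_n}(U_n t) - h(U_n t)|
  have key2 : ∀ n, ‖(charFn P (Z n) t -
        ∫ ω, h ((U n ω) • t) * Complex.exp ((⟪t, V n ω⟫ : ℝ) * Complex.I) ∂P)‖
      ≤ ∫ ω, ‖(charFn P (Y n (N n ω)) ((U n ω) • t) - h ((U n ω) • t))‖ ∂P := by
    intro n
    have hF1eq : (fun ω => charFn P (Y n (N n ω)) ((U n ω) • t) *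
        Complex.exp ((⟪t, V n ω⟫ : ℝ) * Complex.I))
        = fun ω => (fun k => charFn P (Y n k) (((d n)⁻¹ * b n k) • t) *
            Complex.exp ((⟪t, (d n)⁻¹ • (a n k - c n)⟫ : ℝ) * Complex.I)) (N n ω) :=
      funext fun ω => by simp only [hU, hV]
    have hF2eq : (fun ω => h ((U n ω) • t) *
        Complex.exp ((⟪t, V n ω⟫ : ℝ) * Complex.I))
        = fun ω => (fun k => h (((d n)⁻¹ * b n k) • t) *
            Complex.exp ((⟪t, (d n)⁻¹ • (a n k - c n)⟫ : ℝ) * Complex.I)) (N n ω) :=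
      funext fun ω => by simp only [hU, hV]
    have hF1int : Integrable (fun ω => charFn P (Y n (N n ω)) ((U n ω) • t) *
        Complex.exp ((⟪t, V n ω⟫ : ℝ) * Complex.I)) P := by
      rw [hF1eq]
      refine hqint n (fun k => charFn P (Y n k) (((d n)⁻¹ * b n k) • t) *
        Complex.exp ((⟪t, (d n)⁻¹ • (a n k - c n)⟫ : ℝ) * Complex.I)) fun k => ?_
      rw [norm_mul, abs_exp_I, mul_one]
      exact le_trans (abs_charFn_le P _) one_le_two
    have hF2int : Integrable (fun ω => h ((U n ω) • t) *
        Complex.exp ((⟪t, V n ω⟫ : ℝ) * Complex.I)) P := by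
      rw [hF2eq]
      refine hqint n (fun k => h (((d n)⁻¹ * b n k) • t) *
        Complex.exp ((⟪t, (d n)⁻¹ • (a n k - c n)⟫ : ℝ) * Complex.I)) fun k => ?_
      rw [norm_mul, abs_exp_I, mul_one, hh]
      exact le_trans (abs_charFn_le P _) one_le_two
    rw [hid n, ← integral_sub hF1int hF2int]
    calc ‖∫ ω, (charFn P (Y n (N n ω)) ((U n ω) • t) *
            Complex.exp ((⟪t, V n ω⟫ : ℝ) * Complex.I) -
            h ((U n ω) • t) * Complex.exp ((⟪t, V n ω⟫ : ℝ) * Complex.I)) ∂P‖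
        ≤ ∫ ω, ‖charFn P (Y n (N n ω)) ((U n ω) • t) *
            Complex.exp ((⟪t, V n ω⟫ : ℝ) * Complex.I) -
            h ((U n ω) • t) * Complex.exp ((⟪t, V n ω⟫ : ℝ) * Complex.I)‖ ∂P :=
          norm_integral_le_integral_norm _
      _ = ∫ ω, ‖(charFn P (Y n (N n ω)) ((U n ω) • t) - h ((U n ω) • t))‖ ∂P := by
          congr 1
          funext ω
          rw [← sub_mul, norm_mul, abs_exp_I, mul_one]
  -- Step 3 : the upper bound tends to zero
  have hDlim : Tendsto (fun n =>
      ∫ ω, ‖(charFn P (Y n (N n ω)) ((U n ω) • t) - h ((U n ω) • t))‖ ∂P)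
      atTop (𝓝 0) := by
    rw [NormedAddCommGroup.tendsto_nhds_zero]
    intro ε hε
    -- choose R from tightness
    obtain ⟨R, hRtail, hR0⟩ : ∃ R : ℝ, (⨆ n', P {ω | R < |U n' ω|}) < ENNReal.ofReal (ε / 4)
        ∧ 0 < R := by
      have h1 := (htight.eventually_lt_const
          (ENNReal.ofReal_pos.mpr (by positivity : (0:ℝ) < ε / 4))).and
        (eventually_gt_atTop (0:ℝ))
      exact h1.exists
    set T : ℝ := R * ‖t‖ + 1 with hTdef
    have hT0 : 0 < T := by positivity
    -- pointwise bound
    have hbnd : ∀ n ω, ‖(charFn P (Y n (N n ω)) ((U n ω) • t) - h ((U n ω) • t))‖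
        ≤ (⨆ s ∈ Metric.closedBall (0 : EuclideanSpace ℝ (Fin m)) T,
            ‖(charFn P (Y n (N n ω)) s - h s)‖)
          + Set.indicator {ω' | R < |U n ω'|} (fun _ => (2:ℝ)) ω := by
      intro n ω
      have hΨ2 : (⨆ s ∈ Metric.closedBall (0 : EuclideanSpace ℝ (Fin m)) T,
          ‖(charFn P (Y n (N n ω)) s - h s)‖) ≤ 2 :=
        Real.iSup_le (fun s => Real.iSup_le (fun _ => habs2 _ _) (by norm_num)) (by norm_num)
      have hΨ0 : 0 ≤ ⨆ s ∈ Metric.closedBall (0 : EuclideanSpace ℝ (Fin m)) T,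
          ‖(charFn P (Y n (N n ω)) s - h s)‖ :=
        Real.iSup_nonneg fun s => Real.iSup_nonneg fun _ => norm_nonneg _
      by_cases hcase : R < |U n ω|
      · rw [Set.indicator_of_mem (by exact hcase)]
        have := habs2 (Y n (N n ω)) ((U n ω) • t)
        linarith
      · rw [Set.indicator_of_notMem (by exact hcase)]
        push_neg at hcase
        have hmem : (U n ω) • t ∈ Metric.closedBall (0 : EuclideanSpace ℝ (Fin m)) T := by
          rw [Metric.mem_closedBall, dist_zero_right, norm_smul, Real.norm_eq_abs]
          have h1 : |U n ω| * ‖t‖ ≤ R * ‖t‖ :=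
            mul_le_mul_of_nonneg_right hcase (norm_nonneg t)
          rw [hTdef]
          linarith
        have hbdd : BddAbove (Set.range fun s : EuclideanSpace ℝ (Fin m) =>
            ⨆ _ : s ∈ Metric.closedBall (0 : EuclideanSpace ℝ (Fin m)) T,
              ‖(charFn P (Y n (N n ω)) s - h s)‖) := by
          refine ⟨2, ?_⟩
          rintro x ⟨s, rfl⟩
          exact Real.iSup_le (fun _ => habs2 _ _) (by norm_num)
        have h1 : ‖(charFn P (Y n (N n ω)) ((U n ω) • t) - h ((U n ω) • t))‖
            = ⨆ _ : (U n ω) • t ∈ Metric.closedBall (0 : EuclideanSpace ℝ (Fin m)) T,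
              ‖(charFn P (Y n (N n ω)) ((U n ω) • t) - h ((U n ω) • t))‖ :=
          (ciSup_pos (f := fun _ => ‖(charFn P (Y n (N n ω)) ((U n ω) • t) - h ((U n ω) • t))‖) hmem).symm
        rw [h1, add_zero]
        exact le_ciSup hbdd ((U n ω) • t)
    -- integrability of the three functions
    have hDint : ∀ n, Integrable (fun ω =>
        ‖(charFn P (Y n (N n ω)) ((U n ω) • t) - h ((U n ω) • t))‖) P := by
      intro n
      have heq : (fun ω => ‖(charFn P (Y n (N n ω)) ((U n ω) • t)
          - h ((U n ω) • t))‖)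
          = fun ω => (fun k => ‖(charFn P (Y n k) (((d n)⁻¹ * b n k) • t)
            - h (((d n)⁻¹ * b n k) • t))‖) (N n ω) :=
        funext fun ω => by simp only [hU]
      rw [heq]
      refine hqintR n (fun k => ‖(charFn P (Y n k) (((d n)⁻¹ * b n k) • t)
        - h (((d n)⁻¹ * b n k) • t))‖) fun k => ?_
      rw [Real.norm_eq_abs, abs_of_nonneg (norm_nonneg _)]
      exact habs2 _ _
    have hΨint : ∀ n, Integrable (fun ω =>
        ⨆ s ∈ Metric.closedBall (0 : EuclideanSpace ℝ (Fin m)) T,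
          ‖(charFn P (Y n (N n ω)) s - h s)‖) P := by
      intro n
      refine hqintR n (fun k => ⨆ s ∈ Metric.closedBall (0 : EuclideanSpace ℝ (Fin m)) T,
          ‖(charFn P (Y n k) s - h s)‖) fun k => ?_
      rw [Real.norm_eq_abs, abs_of_nonneg
        (Real.iSup_nonneg fun s => Real.iSup_nonneg fun _ => norm_nonneg _)]
      exact Real.iSup_le (fun s => Real.iSup_le (fun _ => habs2 _ _) (by norm_num)) (by norm_num)
    have hsetmeas : ∀ n, MeasurableSet {ω' | R < |U n ω'|} := fun n =>
      measurableSet_lt measurable_const (hUmeas n).abs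
    have hindint : ∀ n, Integrable
        (Set.indicator {ω' | R < |U n ω'|} (fun _ => (2:ℝ))) P := fun n =>
      (integrable_const (2:ℝ)).indicator (hsetmeas n)
    -- per-n integral bound
    have hIbnd : ∀ n, ∫ ω, ‖(charFn P (Y n (N n ω)) ((U n ω) • t)
          - h ((U n ω) • t))‖ ∂P
        ≤ (∫ ω, ⨆ s ∈ Metric.closedBall (0 : EuclideanSpace ℝ (Fin m)) T,
            ‖(charFn P (Y n (N n ω)) s - h s)‖ ∂P) + ε / 2 := by
      intro n
      have h1 : ∫ ω, ‖(charFn P (Y n (N n ω)) ((U n ω) • t)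
            - h ((U n ω) • t))‖ ∂P
          ≤ ∫ ω, ((⨆ s ∈ Metric.closedBall (0 : EuclideanSpace ℝ (Fin m)) T,
              ‖(charFn P (Y n (N n ω)) s - h s)‖)
            + Set.indicator {ω' | R < |U n ω'|} (fun _ => (2:ℝ)) ω) ∂P :=
        integral_mono (hDint n) ((hΨint n).add (hindint n)) (hbnd n)
      rw [integral_add (hΨint n) (hindint n)] at h1
      have h2 : ∫ ω, Set.indicator {ω' | R < |U n ω'|} (fun _ => (2:ℝ)) ω ∂P ≤ ε / 2 := by
        rw [integral_indicator_const (2:ℝ) (hsetmeas n), smul_eq_mul, measureReal_def]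
        have h3 : P {ω' | R < |U n ω'|} ≤ ENNReal.ofReal (ε / 4) :=
          le_of_lt (lt_of_le_of_lt (le_iSup (fun n' => P {ω | R < |U n' ω|}) n) hRtail)
        have h4 : (P {ω' | R < |U n ω'|}).toReal ≤ ε / 4 :=
          ENNReal.toReal_le_of_le_ofReal (by positivity) h3
        linarith
      linarith
    -- conclude
    filter_upwards [(hcoh T hT0).eventually_lt_const (by positivity : (0:ℝ) < ε / 2)]
      with n hn
    have h0 : 0 ≤ ∫ ω, ‖(charFn P (Y n (N n ω)) ((U n ω) • t)
        - h ((U n ω) • t))‖ ∂P :=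
      integral_nonneg fun ω => norm_nonneg _
    rw [Real.norm_of_nonneg h0]
    calc ∫ ω, ‖(charFn P (Y n (N n ω)) ((U n ω) • t) - h ((U n ω) • t))‖ ∂P
        ≤ (∫ ω, ⨆ s ∈ Metric.closedBall (0 : EuclideanSpace ℝ (Fin m)) T,
            ‖(charFn P (Y n (N n ω)) s - h s)‖ ∂P) + ε / 2 := hIbnd n
      _ < ε / 2 + ε / 2 := by linarith
      _ = ε := by ring
  exact squeeze_zero (fun n => norm_nonneg _) key2 hDlim
end

section
/- Let Z and Y be ℝ^m-valued random vectors with characteristic functions f and h respectively, and let W = (U, V^⊤)^⊤ be an ℝ^{m+1}-valued random vector with U a real random variable satisfying P(U ≥ 0) = 1 and V an ℝ^m-valued random vector, such that Y is independent of W. Then f(t) = E[h(U t)·exp(i⟨t, V⟩)] for all t ∈ ℝ^m if and only if Z has the same distribution as U·Y + V. -/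
open MeasureTheory ProbabilityTheory Filter Topology
open scoped RealInnerProductSpace

section Aux
open Complex Set FourierTransform Real
open scoped ContDiff Manifold

variable {E : Type*} [NormedAddCommGroup E] [InnerProductSpace ℝ E] [FiniteDimensional ℝ E]
  [MeasurableSpace E] [BorelSpace E]

/-- A smooth compactly supported real function, as a complex Schwartz map. -/
noncomputable def mySchwartz (g : E → ℝ) (hg : ContDiff ℝ ∞ g) (hsupp : HasCompactSupport g) :
    SchwartzMap E ℂ where
  toFun := fun x => (g x : ℂ)
  smooth' := Complex.ofRealCLM.contDiff.comp hg
  decay' := by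
    intro k n
    have hsmooth : ContDiff ℝ ∞ (fun x => (g x : ℂ)) :=
      Complex.ofRealCLM.contDiff.comp hg
    have hsupp' : HasCompactSupport (fun x => (g x : ℂ)) :=
      hsupp.comp_left (g := fun r : ℝ => (r : ℂ)) rfl
    have hcont : Continuous fun x => ‖x‖ ^ k * ‖iteratedFDeriv ℝ n (fun x => (g x : ℂ)) x‖ :=
      (continuous_norm.pow k).mul (hsmooth.continuous_iteratedFDeriv (mod_cast le_top)).norm
    have hs2 : HasCompactSupport fun x => ‖x‖ ^ k * ‖iteratedFDeriv ℝ n (fun x => (g x : ℂ)) x‖ :=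
      ((hsupp'.iteratedFDeriv (𝕜 := ℝ) n).norm).mul_left
    obtain ⟨C, hC⟩ := hcont.bounded_above_of_compact_support hs2
    exact ⟨C, fun x => (le_abs_self _).trans ((Real.norm_eq_abs _ ▸ hC x))⟩

@[simp] lemma mySchwartz_apply (g : E → ℝ) (hg : ContDiff ℝ ∞ g) (hsupp : HasCompactSupport g)
    (x : E) : mySchwartz g hg hsupp x = (g x : ℂ) := rfl

/-- Two finite measures that integrate all smooth compactly supported functions in the same
way are equal. -/
lemma myext (μ ν : Measure E) [IsFiniteMeasure μ] [IsFiniteMeasure ν]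
    (h : ∀ g : E → ℝ, ContDiff ℝ ∞ g → HasCompactSupport g →
      ∫ x, g x ∂μ = ∫ x, g x ∂ν) : μ = ν := by
  have key : ∀ (μ ν : Measure E), IsFiniteMeasure μ → IsFiniteMeasure ν →
      (∀ g : E → ℝ, ContDiff ℝ ∞ g → HasCompactSupport g →
        ∫ x, g x ∂μ = ∫ x, g x ∂ν) →
      ∀ K U : Set E, IsCompact K → IsOpen U → K ⊆ U → μ K ≤ ν U := by
    intro μ ν hμ hν h K U hK hU hKU
    obtain ⟨L, hL, hKL, hLU⟩ := exists_compact_between hK hU hKU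
    obtain ⟨g, hg0, hg1, hg01⟩ := exists_contMDiffMap_zero_one_of_isClosed (I := 𝓘(ℝ, E)) (n := ⊤)
      (isOpen_interior.isClosed_compl) (hK.isClosed) (by
        simp only [disjoint_compl_left_iff]; exact hKL)
    have hgsmooth : ContDiff ℝ ∞ (g : E → ℝ) := by
      have := g.contMDiff
      rw [contMDiff_iff_contDiff] at this
      exact this
    have hgsupp : HasCompactSupport (g : E → ℝ) := by
      apply HasCompactSupport.of_support_subset_isCompact hL
      intro x hx
      by_contra hxL
      exact hx (hg0 (fun hmem => hxL (interior_subset hmem)))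
    have hgint : Integrable (g : E → ℝ) μ :=
      hgsmooth.continuous.integrable_of_hasCompactSupport hgsupp
    have hgintν : Integrable (g : E → ℝ) ν :=
      hgsmooth.continuous.integrable_of_hasCompactSupport hgsupp
    have h1 : (μ K).toReal ≤ ∫ x, g x ∂μ := by
      rw [← measureReal_def, ← integral_indicator_one hK.measurableSet]
      apply integral_mono ((integrable_indicator_iff hK.measurableSet).2
        (integrableOn_const hK.measure_lt_top.ne)) hgint
      intro x
      by_cases hx : x ∈ K
      · rw [indicator_of_mem hx]
        exact le_of_eq (hg1 hx).symm
      · simp only [indicator_of_notMem hx]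
        exact (hg01 x).1
    have h2 : ∫ x, g x ∂ν ≤ (ν U).toReal := by
      rw [← measureReal_def, ← integral_indicator_one hU.measurableSet]
      apply integral_mono hgintν ((integrable_indicator_iff hU.measurableSet).2
        (integrableOn_const (measure_ne_top _ _)))
      intro x
      by_cases hx : x ∈ U
      · rw [indicator_of_mem hx]; exact (hg01 x).2
      · simp only [indicator_of_notMem hx]
        have : g x = 0 := hg0 (fun hmem => hx (hLU (interior_subset hmem)))
        simp [this]
    have := h1.trans ((h g hgsmooth hgsupp) ▸ h2)
    exact (ENNReal.toReal_le_toReal (measure_ne_top _ _) (measure_ne_top _ _)).1 this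
  have comp : ∀ K : Set E, IsCompact K → μ K = ν K := by
    intro K hK
    have h' : ∀ g : E → ℝ, ContDiff ℝ ∞ g → HasCompactSupport g →
        ∫ x, g x ∂ν = ∫ x, g x ∂μ := fun g a b => (h g a b).symm
    apply le_antisymm
    · rw [Set.measure_eq_iInf_isOpen K ν]
      exact le_iInf₂ fun U hU => le_iInf fun hUopen =>
        key μ ν ‹_› ‹_› h K U hK hUopen hU
    · rw [Set.measure_eq_iInf_isOpen K μ]
      exact le_iInf₂ fun U hU => le_iInf fun hUopen =>
        key ν μ ‹_› ‹_› h' K U hK hUopen hU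
  ext s hs
  rw [hs.measure_eq_iSup_isCompact, hs.measure_eq_iSup_isCompact]
  exact iSup_congr fun K => iSup_congr fun _ => iSup_congr fun hK => comp K hK

lemma integral_schwartz_eq_of_charFn (μ ν : Measure E) [IsFiniteMeasure μ] [IsFiniteMeasure ν]
    (h : ∀ t : E, ∫ x, Complex.exp ((⟪t, x⟫ : ℝ) * Complex.I) ∂μ
        = ∫ x, Complex.exp ((⟪t, x⟫ : ℝ) * Complex.I) ∂ν)
    (g : SchwartzMap E ℂ) : ∫ x, g x ∂μ = ∫ x, g x ∂ν := by
  set G : SchwartzMap E ℂ := SchwartzMap.fourierTransformCLE ℝ (SchwartzMap E ℂ) g with hG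
  have hinv : ∀ x : E, g x = ∫ v, Complex.exp ((2 * π * ⟪v, x⟫ : ℝ) * Complex.I) • G v := by
    intro x
    have h1 : 𝓕⁻ (𝓕 (⇑g)) = ⇑g :=
      g.continuous.fourierInv_fourier_eq g.integrable
        (by exact G.integrable)
    conv_lhs => rw [← h1]
    rw [Real.fourierInv_eq']
    simp only [hG, SchwartzMap.fourierTransformCLE_apply, SchwartzMap.fourier_coe]
    rfl
  have key : ∀ (μ : Measure E), IsFiniteMeasure μ →
      ∫ x, g x ∂μ = ∫ v, (∫ x, Complex.exp ((⟪(2 * π) • v, x⟫ : ℝ) * Complex.I) ∂μ) • G v := by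
    intro μ hμ
    calc ∫ x, g x ∂μ
        = ∫ x, ∫ v, Complex.exp ((2 * π * ⟪v, x⟫ : ℝ) * Complex.I) • G v ∂(volume) ∂μ := by
          simp_rw [← hinv]
      _ = ∫ v, ∫ x, Complex.exp ((2 * π * ⟪v, x⟫ : ℝ) * Complex.I) • G v ∂μ ∂(volume) := by
          apply MeasureTheory.integral_integral_swap
          have hcont : Continuous fun p : E × E =>
              Complex.exp ((2 * π * ⟪p.2, p.1⟫ : ℝ) * Complex.I) • G p.2 := by
            apply Continuous.smul (f := fun p : E × E => Complex.exp ((2 * π * ⟪p.2, p.1⟫ : ℝ) * Complex.I))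
              (g := fun p : E × E => G p.2)
            · apply Complex.continuous_exp.comp
              exact (Complex.continuous_ofReal.comp
                ((continuous_const.mul ((continuous_inner.comp
                  (continuous_snd.prodMk continuous_fst)))))).mul continuous_const
            · exact G.continuous.comp continuous_snd
          have hbound : Integrable (fun p : E × E => ‖G p.2‖) (μ.prod volume) := by
            have := (integrable_const (μ := μ) (1:ℝ)).mul_prod (G.integrable (μ := volume)).norm
            simpa using this
          apply hbound.mono' hcont.aestronglyMeasurable
          filter_upwards with p
          rw [norm_smul]
          have : ‖cexp ((2 * π * ⟪p.2, p.1⟫ : ℝ) * Complex.I)‖ = 1 := by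
            rw [Complex.norm_exp]
            norm_num
          rw [this, one_mul]
      _ = ∫ v, (∫ x, Complex.exp ((⟪(2 * π) • v, x⟫ : ℝ) * Complex.I) ∂μ) • G v ∂(volume) := by
          congr 1
          ext v
          rw [← integral_smul_const]
          congr 1; ext x
          rw [real_inner_smul_left]
  rw [key μ ‹_›, key ν ‹_›]
  congr 1
  ext v
  rw [h]

/-- Uniqueness of characteristic functions, for finite measures on a finite-dimensional
inner product space. -/
lemma ext_of_charFn (μ ν : Measure E) [IsFiniteMeasure μ] [IsFiniteMeasure ν]
    (h : ∀ t : E, ∫ x, Complex.exp ((⟪t, x⟫ : ℝ) * Complex.I) ∂μ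
        = ∫ x, Complex.exp ((⟪t, x⟫ : ℝ) * Complex.I) ∂ν) : μ = ν := by
  apply myext
  intro g hg hsupp
  have := integral_schwartz_eq_of_charFn μ ν h (mySchwartz g hg hsupp)
  simp only [mySchwartz_apply] at this
  have h2 : ∀ (κ : Measure E), ∫ x, ((g x : ℝ) : ℂ) ∂κ = ((∫ x, g x ∂κ : ℝ) : ℂ) :=
    fun κ => integral_ofReal
  rw [h2, h2] at this
  exact_mod_cast this

end Aux

section Main

variable {Ω : Type*} [MeasurableSpace Ω] {m : ℕ}

local notation "E'" => EuclideanSpace ℝ (Fin m)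

lemma continuous_cexp_inner (t : E') : Continuous fun x : E' =>
    Complex.exp ((⟪t, x⟫ : ℝ) * Complex.I) :=
  Complex.continuous_exp.comp ((Complex.continuous_ofReal.comp
    (continuous_const.inner continuous_id)).mul continuous_const)

lemma charFn_eq_map (P : Measure Ω) (X : Ω → E') (hX : Measurable X) (t : E') :
    charFn P X t = ∫ x, Complex.exp ((⟪t, x⟫ : ℝ) * Complex.I) ∂(P.map X) := by
  rw [charFn, integral_map hX.aemeasurable (continuous_cexp_inner t).aestronglyMeasurable]

/-- Computation of the characteristic function of `U • Y + V` when `Y` is independent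
of `(U, V)`. -/
lemma charFn_smul_add (P : Measure Ω) [IsProbabilityMeasure P]
    (Y : Ω → E') (hY : Measurable Y) (U : Ω → ℝ) (hU : Measurable U)
    (V : Ω → E') (hV : Measurable V)
    (hindep : IndepFun Y (fun ω => (U ω, V ω)) P) (t : E') :
    charFn P (fun ω => U ω • Y ω + V ω) t
      = ∫ ω, (charFn P Y ((U ω) • t)) * Complex.exp ((⟪t, V ω⟫ : ℝ) * Complex.I) ∂P := by
  set W : Ω → ℝ × E' := fun ω => (U ω, V ω) with hW
  have hWm : Measurable W := hU.prodMk hV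
  set μY := P.map Y with hμY
  set μW := P.map W with hμW
  haveI : IsProbabilityMeasure μY := Measure.isProbabilityMeasure_map hY.aemeasurable
  haveI : IsProbabilityMeasure μW := Measure.isProbabilityMeasure_map hWm.aemeasurable
  have hprod : P.map (fun ω => (Y ω, W ω)) = μY.prod μW :=
    (indepFun_iff_map_prod_eq_prod_map_map hY.aemeasurable hWm.aemeasurable).mp hindep
  -- the function on the product space
  set F : E' × (ℝ × E') → ℂ :=
    fun p => Complex.exp (((p.2.1 * ⟪t, p.1⟫ + ⟪t, p.2.2⟫ : ℝ)) * Complex.I) with hF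
  have hFcont : Continuous F := by
    have hre : Continuous fun p : E' × (ℝ × E') => (p.2.1 * ⟪t, p.1⟫ + ⟪t, p.2.2⟫ : ℝ) :=
      ((continuous_snd.fst).mul (continuous_const.inner continuous_fst)).add
        (continuous_const.inner continuous_snd.snd)
    exact Complex.continuous_exp.comp ((Complex.continuous_ofReal.comp hre).mul continuous_const)
  have hFnorm : ∀ p, ‖F p‖ = 1 := by
    intro p
    rw [hF, Complex.norm_exp]
    simp
  have hFint : Integrable F (μY.prod μW) := by
    apply (integrable_const (1:ℝ)).mono' hFcont.aestronglyMeasurable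
    filter_upwards with p
    rw [hFnorm p]
  -- step 1 : write charFn as an integral over the joint law
  have step1 : charFn P (fun ω => U ω • Y ω + V ω) t = ∫ p, F p ∂(μY.prod μW) := by
    rw [← hprod, integral_map (hY.aemeasurable.prodMk hWm.aemeasurable)
      hFcont.aestronglyMeasurable, charFn]
    congr 1
    ext ω
    rw [hF]
    congr 2
    simp only
    rw [inner_add_right, real_inner_smul_right]
  -- step 2 : Fubini
  have step2 : ∫ p, F p ∂(μY.prod μW)
      = ∫ w, ∫ y, F (y, w) ∂μY ∂μW := integral_prod_symm F hFint
  -- step 3 : pointwise computation of the inner integral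
  have step3 : ∀ w : ℝ × E', ∫ y, F (y, w) ∂μY
      = (∫ y, Complex.exp ((w.1 * ⟪t, y⟫ : ℝ) * Complex.I) ∂μY)
        * Complex.exp ((⟪t, w.2⟫ : ℝ) * Complex.I) := by
    intro w
    rw [← integral_mul_const]
    congr 1
    ext y
    rw [hF]
    simp only
    rw [Complex.ofReal_add, add_mul, Complex.exp_add]
  -- step 4 : the inner integral is the characteristic function of Y
  have step4 : ∀ u : ℝ, ∫ y, Complex.exp ((u * ⟪t, y⟫ : ℝ) * Complex.I) ∂μY
      = charFn P Y (u • t) := by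
    intro u
    rw [charFn_eq_map P Y hY (u • t), ← hμY]
    congr 1
    ext y
    rw [real_inner_smul_left]
  -- measurability of the integrand for pulling back along W
  have hmeas : AEStronglyMeasurable
      (fun w : ℝ × E' => (∫ y, Complex.exp ((w.1 * ⟪t, y⟫ : ℝ) * Complex.I) ∂μY)
        * Complex.exp ((⟪t, w.2⟫ : ℝ) * Complex.I)) μW := by
    have hcont2 : Continuous fun q : (ℝ × E') × E' =>
        Complex.exp ((q.1.1 * ⟪t, q.2⟫ : ℝ) * Complex.I) :=
      Complex.continuous_exp.comp ((Complex.continuous_ofReal.comp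
        ((continuous_fst.fst).mul (continuous_const.inner continuous_snd))).mul
        continuous_const)
    have hint2 : Integrable (fun q : (ℝ × E') × E' =>
        Complex.exp ((q.1.1 * ⟪t, q.2⟫ : ℝ) * Complex.I)) (μW.prod μY) := by
      apply (integrable_const (1:ℝ)).mono' hcont2.aestronglyMeasurable
      filter_upwards with q
      rw [Complex.norm_exp]
      simp
    exact (hint2.integral_prod_left).aestronglyMeasurable.mul
      ((continuous_cexp_inner t).comp continuous_snd).aestronglyMeasurable
  calc charFn P (fun ω => U ω • Y ω + V ω) t
      = ∫ w, ∫ y, F (y, w) ∂μY ∂μW := by rw [step1, step2]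
    _ = ∫ w, (∫ y, Complex.exp ((w.1 * ⟪t, y⟫ : ℝ) * Complex.I) ∂μY)
          * Complex.exp ((⟪t, w.2⟫ : ℝ) * Complex.I) ∂μW := by
        congr 1; ext w; exact step3 w
    _ = ∫ ω, (∫ y, Complex.exp ((U ω * ⟪t, y⟫ : ℝ) * Complex.I) ∂μY)
          * Complex.exp ((⟪t, V ω⟫ : ℝ) * Complex.I) ∂P := by
        rw [hμW, integral_map hWm.aemeasurable hmeas]
    _ = ∫ ω, (charFn P Y ((U ω) • t)) * Complex.exp ((⟪t, V ω⟫ : ℝ) * Complex.I) ∂P := by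
        congr 1; ext ω; rw [step4]

end Main

/-- Let `Z`, `Y` be `ℝ^m`-valued random vectors with characteristic functions `f`, `h`,
and let `W = (U, V)` with `P(U ≥ 0) = 1` be independent of `Y`. Then
`f(t) = E[h(U t) exp(i⟨t, V⟩)]` for all `t` iff `Z` is distributed as `U • Y + V`. -/
theorem charFn_representation_iff_eq_distribution
    {Ω : Type*} [MeasurableSpace Ω] (P : Measure Ω) [IsProbabilityMeasure P]
    (m : ℕ)
    (Z : Ω → EuclideanSpace ℝ (Fin m)) (hZ : Measurable Z)
    (Y : Ω → EuclideanSpace ℝ (Fin m)) (hY : Measurable Y)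
    (f : EuclideanSpace ℝ (Fin m) → ℂ) (hf : ∀ t, f t = charFn P Z t)
    (h : EuclideanSpace ℝ (Fin m) → ℂ) (hh : ∀ t, h t = charFn P Y t)
    (U : Ω → ℝ) (hU : Measurable U)
    (V : Ω → EuclideanSpace ℝ (Fin m)) (hV : Measurable V)
    -- P(U ≥ 0) = 1
    (hUnonneg : P {ω | 0 ≤ U ω} = 1)
    -- Y is independent of W = (U, V)
    (hindep : IndepFun Y (fun ω => (U ω, V ω)) P) :
    (∀ t : EuclideanSpace ℝ (Fin m),
        f t = ∫ ω, h ((U ω) • t) * Complex.exp ((⟪t, V ω⟫ : ℝ) * Complex.I) ∂P) ↔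
      P.map Z = P.map (fun ω => (U ω) • Y ω + V ω) := by
  have hcomb : Measurable fun ω => U ω • Y ω + V ω := (hU.smul hY).add hV
  haveI : IsProbabilityMeasure (P.map Z) := Measure.isProbabilityMeasure_map hZ.aemeasurable
  haveI : IsProbabilityMeasure (P.map fun ω => U ω • Y ω + V ω) :=
    Measure.isProbabilityMeasure_map hcomb.aemeasurable
  have hrhs : ∀ t, (∫ ω, h ((U ω) • t) * Complex.exp ((⟪t, V ω⟫ : ℝ) * Complex.I) ∂P)
      = charFn P (fun ω => U ω • Y ω + V ω) t := by
    intro t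
    rw [charFn_smul_add P Y hY U hU V hV hindep t]
    congr 1; ext ω; rw [hh]
  constructor
  · intro H
    apply ext_of_charFn
    intro t
    rw [← charFn_eq_map P Z hZ t, ← charFn_eq_map P _ hcomb t, ← hf t, H t, hrhs t]
  · intro H t
    rw [hrhs t, hf t, charFn_eq_map P Z hZ t, charFn_eq_map P _ hcomb t, H]
end

section
/- Under the general setup, assume the family {U_n}_{n∈ℕ} is weakly relatively compact (tight), the coherency condition holds, and Z_n converges in distribution to some ℝ^m-valued random vector Z as n → ∞. Then the family {V_n}_{n∈ℕ} of ℝ^m-valued random vectors is weakly relatively compact (tight), and hence the family {W_n = (U_n, V_n^⊤)^⊤}_{n∈ℕ} of ℝ^{m+1}-valued random vectors is weakly relatively compact (tight). -/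
open MeasureTheory ProbabilityTheory Filter Topology
open scoped RealInnerProductSpace

section
namespace TightAux

noncomputable def sincLike (y : ℝ) : ℝ := if y = 0 then 0 else 2 - 2 * Real.sin y / y

lemma sin_div_abs_le_one (y : ℝ) : |Real.sin y / y| ≤ 1 := by
  rcases eq_or_ne y 0 with h | h
  · simp [h]
  · rw [abs_div]
    exact div_le_one_of_le₀ Real.abs_sin_le_abs (abs_nonneg _)

lemma sincLike_nonneg (y : ℝ) : 0 ≤ sincLike y := by
  unfold sincLike
  split
  · exact le_refl 0
  · have h := (abs_le.mp (sin_div_abs_le_one y)).2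
    rw [mul_div_assoc]
    linarith

lemma sincLike_le_four (y : ℝ) : sincLike y ≤ 4 := by
  unfold sincLike
  split
  · norm_num
  · have h := (abs_le.mp (sin_div_abs_le_one y)).1
    rw [mul_div_assoc]
    linarith

lemma one_le_sincLike {y : ℝ} (hy : 2 ≤ |y|) : 1 ≤ sincLike y := by
  have hy0 : y ≠ 0 := by
    intro h; rw [h] at hy; simp at hy; linarith
  unfold sincLike
  rw [if_neg hy0]
  have h1 : Real.sin y / y ≤ |Real.sin y / y| := le_abs_self _
  have h2 : |Real.sin y / y| ≤ 1 / |y| := by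
    rw [abs_div]
    gcongr
    exact Real.abs_sin_le_one _
  have h3 : (1:ℝ) / |y| ≤ 1 / 2 := by
    apply one_div_le_one_div_of_le <;> linarith
  have h4 : Real.sin y / y ≤ 1 / 2 := h1.trans (h2.trans h3)
  rw [mul_div_assoc]
  linarith

lemma measurable_sincLike : Measurable sincLike := by
  unfold sincLike
  exact Measurable.ite (by simp) measurable_const
    ((measurable_const.sub ((measurable_const.mul Real.measurable_sin).div measurable_id)))

lemma tendsto_sincLike_zero : Tendsto sincLike (𝓝[≠] (0:ℝ)) (𝓝 0) := by
  have hslope : Tendsto (fun y : ℝ => Real.sin y / y) (𝓝[≠] 0) (𝓝 1) := by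
    have h := hasDerivAt_iff_tendsto_slope.mp (Real.hasDerivAt_sin 0)
    simp only [Real.cos_zero] at h
    refine h.congr' ?_
    filter_upwards [self_mem_nhdsWithin] with y hy
    simp [slope_def_field, Real.sin_zero]
  have h2 : Tendsto (fun y : ℝ => 2 - 2 * Real.sin y / y) (𝓝[≠] 0) (𝓝 0) := by
    have := (tendsto_const_nhds (x := (2:ℝ))).sub (hslope.const_mul 2)
    norm_num at this
    convert this using 2 with y
    ring
  refine Tendsto.congr' ?_ h2
  filter_upwards [self_mem_nhdsWithin] with y hy
  simp only [Set.mem_compl_iff, Set.mem_singleton_iff] at hy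
  simp [sincLike, hy]

end TightAux

end
section
namespace TightAux

open MeasureTheory ProbabilityTheory Filter Topology

variable {Ω : Type*} [MeasurableSpace Ω] (P : Measure Ω) [IsProbabilityMeasure P]

lemma abs_one_sub_cos_le (r : ℝ) : ‖1 - Real.cos r‖ ≤ 2 := by
  have h1 := Real.cos_le_one r
  have h2 := Real.neg_one_le_cos r
  rw [Real.norm_eq_abs, abs_le]; constructor <;> linarith

lemma integrable_of_bdd {α E : Type*} [MeasurableSpace α] [NormedAddCommGroup E]
    {μ : Measure α} [IsFiniteMeasure μ] {g : α → E}
    (hg : AEStronglyMeasurable g μ) {C : ℝ} (hC : ∀ ω, ‖g ω‖ ≤ C) : Integrable g μ :=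
  ⟨hg, HasFiniteIntegral.of_bounded (ae_of_all _ hC)⟩

lemma intervalIntegral_one_sub_cos {u : ℝ} (hu : 0 < u) (x : ℝ) :
    ∫ t in (-u)..u, (1 - Real.cos (t * x)) = u * sincLike (u * x) := by
  rcases eq_or_ne x 0 with hx | hx
  · simp [hx, sincLike]
  · have hcos : ∫ t in (-u)..u, Real.cos (t * x)
        = x⁻¹ * (Real.sin (u * x) - Real.sin (-u * x)) := by
      rw [intervalIntegral.integral_comp_mul_right Real.cos hx,
        integral_cos, smul_eq_mul]
    have hsub : ∫ t in (-u)..u, (1 - Real.cos (t * x))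
        = (∫ t in (-u)..u, (1:ℝ)) - ∫ t in (-u)..u, Real.cos (t * x) := by
      apply intervalIntegral.integral_sub intervalIntegrable_const
      exact (Real.continuous_cos.comp (continuous_mul_right x)).intervalIntegrable _ _
    rw [hsub, hcos, intervalIntegral.integral_const, smul_eq_mul, mul_one]
    have hux : u * x ≠ 0 := mul_ne_zero hu.ne' hx
    rw [neg_mul, Real.sin_neg, sincLike, if_neg hux]
    field_simp
    ring

/-- Fubini step. -/
lemma integral_sincLike_eq {X : Ω → ℝ} (hX : Measurable X) {u : ℝ} (hu : 0 < u) :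
    ∫ ω, sincLike (u * X ω) ∂P
      = u⁻¹ * ∫ t in (-u)..u, (1 - ∫ ω, Real.cos (t * X ω) ∂P) := by
  have hcosInt : ∀ t : ℝ, Integrable (fun ω => Real.cos (t * X ω)) P := fun t =>
    integrable_of_bdd ((Real.measurable_cos.comp ((measurable_const.mul hX))).aestronglyMeasurable)
      (C := 1) (fun ω => by rw [Real.norm_eq_abs]; exact Real.abs_cos_le_one _)
  have step1 : ∀ t : ℝ, (1 - ∫ ω, Real.cos (t * X ω) ∂P)
      = ∫ ω, (1 - Real.cos (t * X ω)) ∂P := by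
    intro t
    rw [integral_sub (integrable_const 1) (hcosInt t), integral_const]
    simp
  simp_rw [step1]
  have hle : (-u) ≤ u := by linarith
  rw [intervalIntegral.integral_of_le hle]
  have hprod : Integrable (Function.uncurry fun (t : ℝ) (ω : Ω) => (1 - Real.cos (t * X ω)))
      ((volume.restrict (Set.Ioc (-u) u)).prod P) := by
    apply integrable_of_bdd (C := 2)
    · apply Measurable.aestronglyMeasurable
      exact measurable_const.sub
        (Real.measurable_cos.comp (measurable_fst.mul (hX.comp measurable_snd)))
    · exact fun p => abs_one_sub_cos_le _
  rw [MeasureTheory.integral_integral_swap hprod]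
  have inner : ∀ ω, (∫ t in Set.Ioc (-u) u, (1 - Real.cos (t * X ω)))
      = u * sincLike (u * X ω) := by
    intro ω
    rw [← intervalIntegral.integral_of_le hle]
    exact intervalIntegral_one_sub_cos hu _
  simp_rw [inner]
  rw [MeasureTheory.integral_const_mul, ← mul_assoc, inv_mul_cancel₀ hu.ne', one_mul]

/-- Markov-type step. -/
lemma meas_le_integral_sincLike {X : Ω → ℝ} (hX : Measurable X) {u : ℝ} (hu : 0 < u) :
    P {ω | 2 / u ≤ |X ω|} ≤ ENNReal.ofReal (∫ ω, sincLike (u * X ω) ∂P) := by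
  have hA : MeasurableSet {ω | 2 / u ≤ |X ω|} := measurableSet_le measurable_const hX.abs
  have hint : Integrable (fun ω => sincLike (u * X ω)) P :=
    integrable_of_bdd ((measurable_sincLike.comp (measurable_const.mul hX)).aestronglyMeasurable)
      (C := 4) (fun ω => by
        rw [Real.norm_eq_abs, abs_of_nonneg (sincLike_nonneg _)]
        exact sincLike_le_four _)
  calc P {ω | 2 / u ≤ |X ω|} = ∫⁻ _ in {ω | 2 / u ≤ |X ω|}, 1 ∂P := (setLIntegral_one _).symm
    _ ≤ ∫⁻ ω in {ω | 2 / u ≤ |X ω|}, ENNReal.ofReal (sincLike (u * X ω)) ∂P := by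
        apply setLIntegral_mono
          (ENNReal.measurable_ofReal.comp (measurable_sincLike.comp (measurable_const.mul hX)))
        intro ω hω
        apply ENNReal.one_le_ofReal.mpr
        apply one_le_sincLike
        show 2 ≤ |u * X ω|
        rw [abs_mul, abs_of_pos hu]
        calc (2:ℝ) = u * (2 / u) := by field_simp
          _ ≤ u * |X ω| := by
            apply mul_le_mul_of_nonneg_left hω hu.le
    _ ≤ ∫⁻ ω, ENNReal.ofReal (sincLike (u * X ω)) ∂P := setLIntegral_le_lintegral _ _
    _ = ENNReal.ofReal (∫ ω, sincLike (u * X ω) ∂P) :=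
        (MeasureTheory.ofReal_integral_eq_lintegral_ofReal hint
          (ae_of_all _ fun ω => sincLike_nonneg _)).symm

end TightAux
end
section
namespace TightAux

open MeasureTheory ProbabilityTheory Filter Topology
open scoped RealInnerProductSpace

variable {Ω : Type*} [MeasurableSpace Ω] (P : Measure Ω) [IsProbabilityMeasure P] {m : ℕ}

lemma charFn_abs_le_one (X : Ω → EuclideanSpace ℝ (Fin m)) (t : EuclideanSpace ℝ (Fin m)) :
    ‖charFn P X t‖ ≤ 1 := by
  unfold charFn
  calc ‖∫ ω, Complex.exp ((⟪t, X ω⟫ : ℝ) * Complex.I) ∂P‖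
      ≤ ∫ ω, ‖Complex.exp ((⟪t, X ω⟫ : ℝ) * Complex.I)‖ ∂P := norm_integral_le_integral_norm _
    _ = ∫ (_ : Ω), (1:ℝ) ∂P := by
        congr 1; funext ω
        rw [Complex.norm_exp_ofReal_mul_I]
    _ = 1 := by simp

lemma charFn_single_re (X : Ω → EuclideanSpace ℝ (Fin m)) (hX : Measurable X)
    (j : Fin m) (s : ℝ) :
    (charFn P X (EuclideanSpace.single j s)).re = ∫ ω, Real.cos (s * X ω j) ∂P := by
  unfold charFn
  have hin : ∀ ω, (⟪EuclideanSpace.single j s, X ω⟫ : ℝ) = s * X ω j := fun ω => by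
    rw [EuclideanSpace.inner_single_left]; simp
  simp_rw [hin]
  have hmeas : Measurable fun ω => Complex.exp ((s * X ω j : ℝ) * Complex.I) :=
    Complex.measurable_exp.comp
      ((Complex.measurable_ofReal.comp (measurable_const.mul ((measurable_pi_apply j).comp ((WithLp.measurable_ofLp _ _).comp hX)))).mul_const _)
  have hint : Integrable (fun ω => Complex.exp ((s * X ω j : ℝ) * Complex.I)) P :=
    integrable_of_bdd hmeas.aestronglyMeasurable (C := 1) (fun ω => by
      rw [Complex.norm_exp_ofReal_mul_I])
  have := integral_re (μ := P) hint
  simp only [RCLike.re_to_complex] at this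
  rw [← this]
  congr 1; funext ω
  exact Complex.exp_ofReal_mul_I_re _

lemma le_biSup_of {α : Type*} (f : α → ℝ) (hf2 : ∀ t, f t ≤ 2) {B : Set α} {t₀ : α}
    (ht₀ : t₀ ∈ B) : f t₀ ≤ ⨆ t ∈ B, f t := by
  have hb : BddAbove (Set.range fun t => ⨆ _ : t ∈ B, f t) := by
    refine ⟨2, ?_⟩
    rintro x ⟨t, rfl⟩
    exact Real.iSup_le (fun _ => hf2 t) (by norm_num)
  refine le_trans ?_ (le_ciSup hb t₀)
  rw [ciSup_pos ht₀]

lemma biSup_le_two {α : Type*} (f : α → ℝ) (hf2 : ∀ t, f t ≤ 2) (B : Set α) :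
    (⨆ t ∈ B, f t) ≤ 2 :=
  Real.iSup_le (fun t => Real.iSup_le (fun _ => hf2 t) (by norm_num)) (by norm_num)

lemma biSup_nonneg {α : Type*} (f : α → ℝ) (hf0 : ∀ t, 0 ≤ f t) (B : Set α) :
    0 ≤ ⨆ t ∈ B, f t :=
  Real.iSup_nonneg (fun t => Real.iSup_nonneg (fun _ => hf0 t))

end TightAux
end
section
namespace TightAux

open MeasureTheory ProbabilityTheory Filter Topology
open scoped RealInnerProductSpace

variable {Ω : Type*} [MeasurableSpace Ω] (P : Measure Ω) [IsProbabilityMeasure P] {m : ℕ}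

lemma cont_cosInt {X : Ω → ℝ} (hX : Measurable X) :
    Continuous fun t : ℝ => ∫ ω, Real.cos (t * X ω) ∂P := by
  apply MeasureTheory.continuous_of_dominated (bound := fun _ => (1:ℝ))
  · exact fun t => (Real.measurable_cos.comp (measurable_const.mul hX)).aestronglyMeasurable
  · intro t
    filter_upwards with ω
    rw [Real.norm_eq_abs]
    exact Real.abs_cos_le_one _
  · exact integrable_const 1
  · filter_upwards with ω
    exact Real.continuous_cos.comp (continuous_mul_right (X ω))

lemma coord_bound {X W : Ω → EuclideanSpace ℝ (Fin m)} (hX : Measurable X) (hW : Measurable W)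
    (j : Fin m) {u : ℝ} (hu : 0 < u) {G : ℝ}
    (hle : ∀ t : EuclideanSpace ℝ (Fin m), ‖t‖ ≤ u →
      ‖charFn P X t - charFn P W t‖ ≤ G) :
    P {ω | 2 / u ≤ |X ω j|}
      ≤ ENNReal.ofReal ((∫ ω, sincLike (u * W ω j) ∂P) + 2 * G) := by
  have hXj : Measurable fun ω => X ω j := (measurable_pi_apply j).comp ((WithLp.measurable_ofLp _ _).comp hX)
  have hWj : Measurable fun ω => W ω j := (measurable_pi_apply j).comp ((WithLp.measurable_ofLp _ _).comp hW)
  have h1 := meas_le_integral_sincLike P hXj hu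
  refine h1.trans (ENNReal.ofReal_le_ofReal ?_)
  rw [integral_sincLike_eq P hXj hu]
  have contX := cont_cosInt P hXj
  have contW := cont_cosInt P hWj
  have ptwise : ∀ t ∈ Set.Icc (-u) u,
      (1 - ∫ ω, Real.cos (t * X ω j) ∂P) ≤ (1 - ∫ ω, Real.cos (t * W ω j) ∂P) + G := by
    intro t ht
    rw [← charFn_single_re P X hX j t, ← charFn_single_re P W hW j t]
    have hnorm : ‖(EuclideanSpace.single j t : EuclideanSpace ℝ (Fin m))‖ ≤ u := by
      rw [EuclideanSpace.norm_single, Real.norm_eq_abs]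
      exact abs_le.mpr ⟨ht.1, ht.2⟩
    have h2 := hle _ hnorm
    have hre : (charFn P W (EuclideanSpace.single j t)).re
        - (charFn P X (EuclideanSpace.single j t)).re
        ≤ ‖charFn P X (EuclideanSpace.single j t)
            - charFn P W (EuclideanSpace.single j t)‖ := by
      calc (charFn P W (EuclideanSpace.single j t)).re
            - (charFn P X (EuclideanSpace.single j t)).re
          = (charFn P W (EuclideanSpace.single j t)
              - charFn P X (EuclideanSpace.single j t)).re := by rw [Complex.sub_re]
        _ ≤ ‖charFn P W (EuclideanSpace.single j t)
              - charFn P X (EuclideanSpace.single j t)‖ := Complex.re_le_norm _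
        _ = _ := norm_sub_rev _ _
    linarith
  have int1 : IntervalIntegrable (fun t => 1 - ∫ ω, Real.cos (t * X ω j) ∂P)
      MeasureTheory.volume (-u) u := (continuous_const.sub contX).intervalIntegrable _ _
  have int2 : IntervalIntegrable (fun t => (1 - ∫ ω, Real.cos (t * W ω j) ∂P) + G)
      MeasureTheory.volume (-u) u :=
    ((continuous_const.sub contW).add continuous_const).intervalIntegrable _ _
  have mono := intervalIntegral.integral_mono_on (by linarith) int1 int2 ptwise
  have hadd : (∫ t in (-u)..u, ((1 - ∫ ω, Real.cos (t * W ω j) ∂P) + G))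
      = (∫ t in (-u)..u, (1 - ∫ ω, Real.cos (t * W ω j) ∂P)) + (2 * u) * G := by
    rw [intervalIntegral.integral_add (f := fun t => 1 - ∫ ω, Real.cos (t * W ω j) ∂P) (g := fun _ => G) ((continuous_const.sub contW).intervalIntegrable _ _)
      intervalIntegrable_const, intervalIntegral.integral_const, smul_eq_mul]
    ring
  calc u⁻¹ * ∫ t in (-u)..u, (1 - ∫ ω, Real.cos (t * X ω j) ∂P)
      ≤ u⁻¹ * ((∫ t in (-u)..u, (1 - ∫ ω, Real.cos (t * W ω j) ∂P)) + (2 * u) * G) := by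
        apply mul_le_mul_of_nonneg_left _ (inv_nonneg.mpr hu.le)
        rw [← hadd]; exact mono
    _ = (∫ ω, sincLike (u * W ω j) ∂P) + 2 * G := by
        rw [integral_sincLike_eq P hWj hu]
        field_simp

end TightAux
end
section
namespace TightAux

open MeasureTheory ProbabilityTheory Filter Topology
open scoped RealInnerProductSpace ENNReal

variable {Ω : Type*} [MeasurableSpace Ω] (P : Measure Ω) [IsProbabilityMeasure P] {m : ℕ}

lemma measurable_coord (j : Fin m) : Measurable fun x : EuclideanSpace ℝ (Fin m) => x j := by
  exact (measurable_pi_apply j).comp (WithLp.measurable_ofLp _ _)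

lemma tsum_mul_eq_lintegral {Nv : Ω → ℕ} (hNv : Measurable Nv) (g : ℕ → ℝ≥0∞) :
    ∑' k, P (Nv ⁻¹' {k}) * g k = ∫⁻ ω, g (Nv ω) ∂P := by
  rw [← MeasureTheory.lintegral_map measurable_from_nat hNv, lintegral_countable']
  congr 1; funext k
  rw [Measure.map_apply hNv (measurableSet_singleton k), mul_comm]

lemma tsum_preimage_singleton_eq_one {Nv : Ω → ℕ} (hNv : Measurable Nv) :
    ∑' k, P (Nv ⁻¹' {k}) = 1 := by
  have hdisj : Pairwise (Function.onFun Disjoint fun k => Nv ⁻¹' {k}) := by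
    intro k k' hkk'
    apply Set.disjoint_left.mpr
    intro ω h1 h2
    exact hkk' ((Set.mem_preimage.mp h1).symm.trans (Set.mem_preimage.mp h2))
  rw [← measure_iUnion hdisj (fun k => hNv (measurableSet_singleton k))]
  have : ⋃ k, Nv ⁻¹' {k} = Set.univ := by
    ext ω; simp
  rw [this, measure_univ]

lemma mixed_bound {X : ℕ → Ω → EuclideanSpace ℝ (Fin m)} (hX : ∀ k, Measurable (X k))
    {Nv : Ω → ℕ} (hNv : Measurable Nv)
    (hind : ∀ k (B : Set (EuclideanSpace ℝ (Fin m))), MeasurableSet B →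
      P (Nv ⁻¹' {k} ∩ (X k) ⁻¹' B) = P (Nv ⁻¹' {k}) * P ((X k) ⁻¹' B))
    {W : Ω → EuclideanSpace ℝ (Fin m)} (hW : Measurable W) (j : Fin m) {u : ℝ} (hu : 0 < u)
    (G : ℕ → ℝ) (hG0 : ∀ k, 0 ≤ G k) (hG2 : ∀ k, G k ≤ 2)
    (hle : ∀ k (t : EuclideanSpace ℝ (Fin m)), ‖t‖ ≤ u →
      ‖charFn P (X k) t - charFn P W t‖ ≤ G k) :
    P {ω | 2 / u ≤ |X (Nv ω) ω j|}
      ≤ ENNReal.ofReal (∫ ω, sincLike (u * W ω j) ∂P)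
        + ENNReal.ofReal (2 * ∫ ω, G (Nv ω) ∂P) := by
  set B : Set (EuclideanSpace ℝ (Fin m)) := {x | 2 / u ≤ |x j|} with hB
  have hBmeas : MeasurableSet B := measurableSet_le measurable_const (measurable_coord j).abs
  have hAW0 : 0 ≤ ∫ ω, sincLike (u * W ω j) ∂P :=
    integral_nonneg fun ω => sincLike_nonneg _
  have hdecomp : {ω | 2 / u ≤ |X (Nv ω) ω j|} = ⋃ k, (Nv ⁻¹' {k} ∩ (X k) ⁻¹' B) := by
    ext ω
    simp only [Set.mem_setOf_eq, Set.mem_iUnion, Set.mem_inter_iff, Set.mem_preimage,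
      Set.mem_singleton_iff, hB]
    constructor
    · intro hw; exact ⟨Nv ω, rfl, hw⟩
    · rintro ⟨k, rfl, hw⟩; exact hw
  have hdisj : Pairwise (Function.onFun Disjoint fun k => Nv ⁻¹' {k} ∩ (X k) ⁻¹' B) := by
    intro k k' hkk'
    apply Set.disjoint_left.mpr
    rintro ω ⟨h1, _⟩ ⟨h2, _⟩
    exact hkk' ((Set.mem_preimage.mp h1).symm.trans (Set.mem_preimage.mp h2))
  have hmeask : ∀ k, MeasurableSet (Nv ⁻¹' {k} ∩ (X k) ⁻¹' B) := fun k =>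
    (hNv (measurableSet_singleton k)).inter ((hX k) hBmeas)
  calc P {ω | 2 / u ≤ |X (Nv ω) ω j|} = ∑' k, P (Nv ⁻¹' {k} ∩ (X k) ⁻¹' B) := by
        rw [hdecomp, measure_iUnion hdisj hmeask]
    _ = ∑' k, P (Nv ⁻¹' {k}) * P ((X k) ⁻¹' B) := by
        congr 1; funext k; exact hind k B hBmeas
    _ ≤ ∑' k, P (Nv ⁻¹' {k}) * (ENNReal.ofReal (∫ ω, sincLike (u * W ω j) ∂P)
          + ENNReal.ofReal (2 * G k)) := by
        apply ENNReal.tsum_le_tsum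
        intro k
        apply mul_le_mul_right
        have hcb := coord_bound P (hX k) hW j hu (hle k)
        have : ((X k) ⁻¹' B) = {ω | 2 / u ≤ |X k ω j|} := rfl
        rw [this]
        refine hcb.trans ?_
        rw [ENNReal.ofReal_add hAW0 (mul_nonneg (by norm_num) (hG0 k))]
    _ = (∑' k, P (Nv ⁻¹' {k}) * ENNReal.ofReal (∫ ω, sincLike (u * W ω j) ∂P))
          + ∑' k, P (Nv ⁻¹' {k}) * ENNReal.ofReal (2 * G k) := by
        rw [← ENNReal.tsum_add]
        congr 1; funext k; rw [mul_add]
    _ = ENNReal.ofReal (∫ ω, sincLike (u * W ω j) ∂P)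
          + ∫⁻ ω, ENNReal.ofReal (2 * G (Nv ω)) ∂P := by
        congr 1
        · rw [ENNReal.tsum_mul_right, tsum_preimage_singleton_eq_one P hNv, one_mul]
        · exact tsum_mul_eq_lintegral P hNv _
    _ = ENNReal.ofReal (∫ ω, sincLike (u * W ω j) ∂P)
          + ENNReal.ofReal (2 * ∫ ω, G (Nv ω) ∂P) := by
        congr 1
        have hint : Integrable (fun ω => 2 * G (Nv ω)) P := by
          apply integrable_of_bdd (C := 4)
          · exact ((measurable_const.mul (measurable_from_nat.comp hNv))).aestronglyMeasurable
          · intro ω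
            rw [Real.norm_eq_abs, abs_of_nonneg (mul_nonneg (by norm_num) (hG0 (Nv ω)))]
            have := hG2 (Nv ω); linarith
        rw [← MeasureTheory.ofReal_integral_eq_lintegral_ofReal hint
          (ae_of_all _ fun ω => mul_nonneg (by norm_num) (hG0 (Nv ω)))]
        rw [MeasureTheory.integral_const_mul]

end TightAux
end
section
namespace TightAux

open MeasureTheory ProbabilityTheory Filter Topology
open scoped RealInnerProductSpace ENNReal

variable {Ω : Type*} [MeasurableSpace Ω] (P : Measure Ω) [IsProbabilityMeasure P] {m : ℕ}

lemma tight_of_eps (g : ℕ → Ω → ℝ)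
    (hg : ∀ ε : ℝ≥0∞, 0 < ε → ∃ R₀ : ℝ, ∀ n, P {ω | R₀ < g n ω} ≤ ε) :
    Tendsto (fun R : ℝ => ⨆ n, P {ω | R < g n ω}) atTop (𝓝 0) := by
  rw [ENNReal.tendsto_nhds_zero]
  intro ε hε
  obtain ⟨R₀, hR₀⟩ := hg ε hε
  filter_upwards [eventually_ge_atTop R₀] with R hR
  exact iSup_le fun n =>
    le_trans (measure_mono fun ω hω => lt_of_le_of_lt hR hω) (hR₀ n)

lemma single_tight {g : Ω → ℝ} (hg : Measurable g) :
    ∀ ε : ℝ≥0∞, 0 < ε → ∃ R₀ : ℝ, 0 < R₀ ∧ P {ω | R₀ < g ω} ≤ ε := by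
  intro ε hε
  have hmeas : ∀ i : ℕ, NullMeasurableSet {ω | (i : ℝ) < g ω} P :=
    fun i => (measurableSet_lt measurable_const hg).nullMeasurableSet
  have hanti : Antitone fun i : ℕ => {ω | (i : ℝ) < g ω} := by
    intro i j hij ω hω
    exact lt_of_le_of_lt ((Nat.cast_le (α := ℝ)).mpr hij) hω
  have htend := tendsto_measure_iInter_atTop (μ := P) hmeas hanti ⟨0, measure_ne_top P _⟩
  have hempty : (⋂ i : ℕ, {ω | (i : ℝ) < g ω}) = ∅ := by
    ext ω
    simp only [Set.mem_iInter, Set.mem_setOf_eq, Set.mem_empty_iff_false, iff_false, not_forall,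
      not_lt]
    obtain ⟨i, hi⟩ := exists_nat_ge (g ω)
    exact ⟨i, hi⟩
  rw [hempty, measure_empty] at htend
  have := (ENNReal.tendsto_nhds_zero.mp htend) ε hε
  obtain ⟨i, hi, hile⟩ := ((this.and (eventually_ge_atTop 1)).exists : ∃ i : ℕ,
    P {ω | (i:ℝ) < g ω} ≤ ε ∧ 1 ≤ i)
  exact ⟨(i : ℝ), by exact_mod_cast hile, hi⟩

lemma norm_le_sum_abs (x : EuclideanSpace ℝ (Fin m)) : ‖x‖ ≤ ∑ j, |x j| := by
  rw [EuclideanSpace.norm_eq]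
  have h1 : ∑ j, ‖x j‖ ^ 2 ≤ (∑ j, ‖x j‖) ^ 2 :=
    Finset.sum_sq_le_sq_sum_of_nonneg fun j _ => norm_nonneg _
  calc Real.sqrt (∑ j, ‖x j‖ ^ 2) ≤ Real.sqrt ((∑ j, ‖x j‖) ^ 2) := Real.sqrt_le_sqrt h1
    _ = ∑ j, ‖x j‖ := Real.sqrt_sq (Finset.sum_nonneg fun j _ => norm_nonneg _)
    _ = ∑ j, |x j| := by simp [Real.norm_eq_abs]

end TightAux
end
section
namespace TightAux

open MeasureTheory ProbabilityTheory Filter Topology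
open scoped RealInnerProductSpace ENNReal

variable {Ω : Type*} [MeasurableSpace Ω] (P : Measure Ω) [IsProbabilityMeasure P] {m : ℕ}

lemma tight_of_distribution_conv {Z : ℕ → Ω → EuclideanSpace ℝ (Fin m)}
    (hZm : ∀ n, Measurable (Z n)) {Zlim : Ω → EuclideanSpace ℝ (Fin m)}
    (hZlim : Measurable Zlim)
    (hconv : ∀ f : BoundedContinuousFunction (EuclideanSpace ℝ (Fin m)) ℝ,
      Tendsto (fun n => ∫ ω, f (Z n ω) ∂P) atTop (𝓝 (∫ ω, f (Zlim ω) ∂P))) :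
    ∀ ε : ℝ≥0∞, 0 < ε → ∃ R₀ : ℝ, 0 < R₀ ∧ ∀ n, P {ω | R₀ < ‖Z n ω‖} ≤ ε := by
  intro ε hε
  rcases eq_or_ne ε ⊤ with rfl | hεtop
  · exact ⟨1, one_pos, fun n => le_top⟩
  let μs : ℕ → ProbabilityMeasure (EuclideanSpace ℝ (Fin m)) := fun n =>
    ⟨P.map (Z n), Measure.isProbabilityMeasure_map (hZm n).aemeasurable⟩
  let μl : ProbabilityMeasure (EuclideanSpace ℝ (Fin m)) :=
    ⟨P.map Zlim, Measure.isProbabilityMeasure_map hZlim.aemeasurable⟩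
  have hconv' : Tendsto μs atTop (𝓝 μl) := by
    apply MeasureTheory.ProbabilityMeasure.tendsto_iff_forall_integral_tendsto.mpr
    intro f
    have h1 : ∀ n, ∫ x, f x ∂((μs n : Measure (EuclideanSpace ℝ (Fin m))))
        = ∫ ω, f (Z n ω) ∂P := fun n =>
      integral_map (hZm n).aemeasurable f.continuous.aestronglyMeasurable
    have h2 : ∫ x, f x ∂((μl : Measure (EuclideanSpace ℝ (Fin m)))) = ∫ ω, f (Zlim ω) ∂P :=
      integral_map hZlim.aemeasurable f.continuous.aestronglyMeasurable
    simp only [h1, h2]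
    exact hconv f
  obtain ⟨R₁, hR₁pos, hR₁⟩ := single_tight P hZlim.norm (ε/2) (ENNReal.half_pos hε.ne')
  set F : Set (EuclideanSpace ℝ (Fin m)) := {x | R₁ + 1 ≤ ‖x‖} with hF
  have hFclosed : IsClosed F := isClosed_le continuous_const continuous_norm
  have hFmeas := hFclosed.measurableSet
  have hlimsup := MeasureTheory.ProbabilityMeasure.limsup_measure_closed_le_of_tendsto
    hconv' hFclosed
  have hmap : (μl : Measure (EuclideanSpace ℝ (Fin m))) F = P {ω | R₁ + 1 ≤ ‖Zlim ω‖} := by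
    show (P.map Zlim) F = _
    rw [Measure.map_apply hZlim hFmeas]
    rfl
  have hμF : (μl : Measure (EuclideanSpace ℝ (Fin m))) F < ε := by
    rw [hmap]
    calc P {ω | R₁ + 1 ≤ ‖Zlim ω‖} ≤ P {ω | R₁ < ‖Zlim ω‖} :=
          measure_mono (fun ω hω => lt_of_lt_of_le (lt_add_one R₁) hω)
      _ ≤ ε/2 := hR₁
      _ < ε := ENNReal.half_lt_self hε.ne' hεtop
  have hev : ∀ᶠ n in atTop, (μs n : Measure (EuclideanSpace ℝ (Fin m))) F < ε :=
    eventually_lt_of_limsup_lt (lt_of_le_of_lt hlimsup hμF)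
  obtain ⟨N₀, hN₀⟩ := eventually_atTop.mp hev
  have hsmall : ∀ n, ∃ R, 0 < R ∧ P {ω | R < ‖Z n ω‖} ≤ ε := fun n =>
    single_tight P (hZm n).norm ε hε
  choose Rf hRfpos hRf using hsmall
  have hsumnn : (0:ℝ) ≤ ∑ k ∈ Finset.range N₀, max (Rf k) 0 :=
    Finset.sum_nonneg fun k _ => le_max_right _ _
  refine ⟨(R₁ + 1) + ∑ k ∈ Finset.range N₀, max (Rf k) 0,
    by linarith, ?_⟩
  intro n
  by_cases hn : n < N₀
  · have hle : Rf n ≤ (R₁ + 1) + ∑ k ∈ Finset.range N₀, max (Rf k) 0 := by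
      calc Rf n ≤ max (Rf n) 0 := le_max_left _ _
        _ ≤ ∑ k ∈ Finset.range N₀, max (Rf k) 0 :=
            Finset.single_le_sum (f := fun k => max (Rf k) 0) (fun k _ => le_max_right _ _) (Finset.mem_range.mpr hn)
        _ ≤ _ := le_add_of_nonneg_left (by linarith)
    exact le_trans (measure_mono fun ω hω => lt_of_le_of_lt hle hω) (hRf n)
  · push_neg at hn
    have h1 : (μs n : Measure (EuclideanSpace ℝ (Fin m))) F = P {ω | R₁ + 1 ≤ ‖Z n ω‖} := by
      show (P.map (Z n)) F = _
      rw [Measure.map_apply (hZm n) hFmeas]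
      rfl
    have h2 := (hN₀ n hn).le
    rw [h1] at h2
    refine le_trans (measure_mono ?_) h2
    intro ω hω
    simp only [Set.mem_setOf_eq] at hω ⊢
    linarith
  
end TightAux
end
section
namespace TightAux

open MeasureTheory ProbabilityTheory Filter Topology
open scoped RealInnerProductSpace ENNReal

variable {Ω : Type*} [MeasurableSpace Ω] (P : Measure Ω) [IsProbabilityMeasure P] {m : ℕ}

lemma abs_charFn_sub_le_two {h : EuclideanSpace ℝ (Fin m) → ℂ} {Wl : Ω → EuclideanSpace ℝ (Fin m)}
    (hh : ∀ t, h t = charFn P Wl t) (X : Ω → EuclideanSpace ℝ (Fin m))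
    (t : EuclideanSpace ℝ (Fin m)) : ‖charFn P X t - h t‖ ≤ 2 := by
  calc ‖charFn P X t - h t‖ ≤ ‖charFn P X t‖ + ‖h t‖ := norm_sub_le _ _
    _ ≤ 1 + 1 := by
        apply add_le_add
        · exact charFn_abs_le_one P X t
        · rw [hh t]; exact charFn_abs_le_one P Wl t
    _ = 2 := by norm_num

lemma TY_tight {Yv : ℕ → ℕ → Ω → EuclideanSpace ℝ (Fin m)}
    (hYv : ∀ n k, Measurable (Yv n k))
    {N : ℕ → Ω → ℕ} (hN : ∀ n, Measurable (N n))
    (hind : ∀ n k (B : Set (EuclideanSpace ℝ (Fin m))), MeasurableSet B →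
      P ((N n) ⁻¹' {k} ∩ (Yv n k) ⁻¹' B) = P ((N n) ⁻¹' {k}) * P ((Yv n k) ⁻¹' B))
    {Wl : Ω → EuclideanSpace ℝ (Fin m)} (hWl : Measurable Wl)
    (h : EuclideanSpace ℝ (Fin m) → ℂ) (hh : ∀ t, h t = charFn P Wl t)
    (hcoh : ∀ T : ℝ, 0 < T →
      Tendsto (fun n => ∫ ω,
          ⨆ t ∈ Metric.closedBall (0 : EuclideanSpace ℝ (Fin m)) T,
            ‖charFn P (Yv n (N n ω)) t - h t‖ ∂P)
        atTop (𝓝 0)) :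
    ∀ ε : ℝ≥0∞, 0 < ε → ∃ R₀ : ℝ, 0 < R₀ ∧
      ∀ n, P {ω | R₀ < ‖Yv n (N n ω) ω‖} ≤ ε := by
  have hYc : ∀ n, Measurable fun ω => Yv n (N n ω) ω := by
    intro n
    have h1 : Measurable fun p : Ω × ℕ => Yv n p.2 p.1 :=
      measurable_from_prod_countable_left fun k => hYv n k
    exact h1.comp (measurable_id.prodMk (hN n))
  intro ε hε
  -- reduce to a real epsilon
  have hmin0 : min ε 1 ≠ 0 := (lt_min hε zero_lt_one).ne'
  have hmint : min ε 1 ≠ ⊤ := (lt_of_le_of_lt (min_le_right _ _) ENNReal.one_lt_top).ne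
  set εr : ℝ := (min ε 1).toReal with hεrdef
  have hεr : 0 < εr := ENNReal.toReal_pos hmin0 hmint
  have hεrle : ENNReal.ofReal εr ≤ ε := by
    rw [hεrdef, ENNReal.ofReal_toReal hmint]
    exact min_le_left _ _
  -- choose u > 0 small using dominated convergence
  have hAlim : Tendsto (fun i : ℕ => ∑ j, ∫ ω, sincLike ((1/(i+1:ℝ)) * Wl ω j) ∂P)
      atTop (𝓝 0) := by
    have h0 : (0:ℝ) = ∑ _j : Fin m, (0:ℝ) := by simp
    rw [h0]
    apply tendsto_finset_sum
    intro j _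
    have hz : (0:ℝ) = ∫ (_ : Ω), (0:ℝ) ∂P := by simp
    rw [hz]
    apply MeasureTheory.tendsto_integral_of_dominated_convergence (bound := fun _ => (4:ℝ))
    · exact fun i => (measurable_sincLike.comp
        (measurable_const.mul ((measurable_coord j).comp hWl))).aestronglyMeasurable
    · exact integrable_const 4
    · intro i
      filter_upwards with ω
      rw [Real.norm_eq_abs, abs_of_nonneg (sincLike_nonneg _)]
      exact sincLike_le_four _
    · filter_upwards with ω
      by_cases hx : Wl ω j = 0
      · simp only [hx, mul_zero]
        simp only [sincLike, if_pos rfl]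
        exact tendsto_const_nhds
      · have h1 : Tendsto (fun i : ℕ => (1/(i+1:ℝ)) * Wl ω j) atTop (𝓝[≠] 0) := by
          rw [tendsto_nhdsWithin_iff]
          constructor
          · have := tendsto_one_div_add_atTop_nhds_zero_nat.mul_const (Wl ω j)
            simpa using this
          · filter_upwards with i
            exact mul_ne_zero (one_div_ne_zero (Nat.cast_add_one_ne_zero i)) hx
        exact tendsto_sincLike_zero.comp h1
  obtain ⟨i, hi⟩ := (hAlim.eventually_lt_const (by linarith : (0:ℝ) < εr/2)).exists
  set u : ℝ := 1/(i+1:ℝ) with hudef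
  have hu : 0 < u := by positivity
  have hAu : (∑ j, ∫ ω, sincLike (u * Wl ω j) ∂P) ≤ εr/2 := hi.le
  -- coherency at T = u
  have hδ : 0 < εr/(2*(2*(m:ℝ)+1)) := by positivity
  obtain ⟨N₀, hN₀⟩ := eventually_atTop.mp ((hcoh u hu).eventually_lt_const hδ)
  set R : ℝ := max 1 ((m:ℝ) * (2/u)) with hRdef
  have hR1 : (1:ℝ) ≤ R := le_max_left _ _
  -- the main bound for n ≥ N₀
  have hmain : ∀ n, N₀ ≤ n → P {ω | R < ‖Yv n (N n ω) ω‖} ≤ ENNReal.ofReal εr := by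
    intro n hn
    have hsub : {ω | R < ‖Yv n (N n ω) ω‖}
        ⊆ ⋃ j : Fin m, {ω | 2/u ≤ |Yv n (N n ω) ω j|} := by
      intro ω hω
      by_contra hcon
      simp only [Set.mem_iUnion, Set.mem_setOf_eq, not_exists, not_le] at hcon
      have h1 : ‖Yv n (N n ω) ω‖ ≤ ∑ j, |Yv n (N n ω) ω j| := norm_le_sum_abs _
      have h2 : ∑ j, |Yv n (N n ω) ω j| ≤ (m:ℝ) * (2/u) := by
        calc ∑ j, |Yv n (N n ω) ω j| ≤ ∑ _j : Fin m, (2/u) :=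
              Finset.sum_le_sum (fun j _ => (hcon j).le)
          _ = (m:ℝ) * (2/u) := by
              simp [Finset.sum_const, Finset.card_univ, nsmul_eq_mul]
      have h3 : (m:ℝ) * (2/u) ≤ R := le_max_right _ _
      have h4 : R < ‖Yv n (N n ω) ω‖ := hω
      linarith
    refine le_trans (measure_mono hsub) ?_
    refine le_trans (measure_iUnion_le _) ?_
    rw [tsum_fintype]
    have hterm : ∀ j : Fin m, P {ω | 2/u ≤ |Yv n (N n ω) ω j|}
        ≤ ENNReal.ofReal (∫ ω, sincLike (u * Wl ω j) ∂P)
          + ENNReal.ofReal (2 * (εr/(2*(2*(m:ℝ)+1)))) := by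
      intro j
      have hmb := mixed_bound P (hYv n) (hN n) (hind n) hWl j hu
        (fun k => ⨆ t ∈ Metric.closedBall (0 : EuclideanSpace ℝ (Fin m)) u,
          ‖charFn P (Yv n k) t - h t‖)
        (fun k => biSup_nonneg _ (fun t => norm_nonneg _) _)
        (fun k => biSup_le_two _ (fun t => abs_charFn_sub_le_two P hh (Yv n k) t) _)
        (fun k t ht => by
          rw [← hh t]
          exact le_biSup_of _ (fun s => abs_charFn_sub_le_two P hh (Yv n k) s)
            (Metric.mem_closedBall.mpr (by rwa [dist_zero_right])))
      refine hmb.trans (add_le_add le_rfl (ENNReal.ofReal_le_ofReal ?_))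
      show (2:ℝ) * (∫ ω, ⨆ t ∈ Metric.closedBall (0 : EuclideanSpace ℝ (Fin m)) u,
          ‖charFn P (Yv n (N n ω)) t - h t‖ ∂P) ≤ _
      have hIn := hN₀ n hn
      linarith
    calc ∑ j, P {ω | 2/u ≤ |Yv n (N n ω) ω j|}
        ≤ ∑ j, (ENNReal.ofReal (∫ ω, sincLike (u * Wl ω j) ∂P)
            + ENNReal.ofReal (2 * (εr/(2*(2*(m:ℝ)+1))))) :=
          Finset.sum_le_sum fun j _ => hterm j
      _ = (∑ j, ENNReal.ofReal (∫ ω, sincLike (u * Wl ω j) ∂P))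
            + ∑ _j : Fin m, ENNReal.ofReal (2 * (εr/(2*(2*(m:ℝ)+1)))) :=
          Finset.sum_add_distrib
      _ ≤ ENNReal.ofReal (εr/2) + ENNReal.ofReal (εr/2) := by
          apply add_le_add
          · rw [← ENNReal.ofReal_sum_of_nonneg
              (fun j _ => integral_nonneg fun ω => sincLike_nonneg _)]
            exact ENNReal.ofReal_le_ofReal hAu
          · rw [Finset.sum_const, Finset.card_univ, Fintype.card_fin, nsmul_eq_mul,
              ← ENNReal.ofReal_natCast m, ← ENNReal.ofReal_mul (Nat.cast_nonneg m)]
            apply ENNReal.ofReal_le_ofReal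
            have hm1 : (0:ℝ) < 2*(m:ℝ)+1 := by positivity
            have heq : (m:ℝ) * (2 * (εr / (2*(2*(m:ℝ)+1)))) = (m:ℝ)*εr / (2*(m:ℝ)+1) := by
              field_simp
            rw [heq, div_le_div_iff₀ hm1 two_pos]
            nlinarith [hεr.le]
      _ = ENNReal.ofReal εr := by
          rw [← ENNReal.ofReal_add (by linarith) (by linarith)]
          norm_num
  -- small n individually, then combine
  have hsmall : ∀ n, ∃ Rn : ℝ, 0 < Rn ∧ P {ω | Rn < ‖Yv n (N n ω) ω‖} ≤ ε := fun n =>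
    single_tight P (hYc n).norm ε hε
  choose Rf hRfpos hRf using hsmall
  have hsumnn : (0:ℝ) ≤ ∑ k ∈ Finset.range N₀, max (Rf k) 0 :=
    Finset.sum_nonneg fun k _ => le_max_right _ _
  refine ⟨R + ∑ k ∈ Finset.range N₀, max (Rf k) 0, by linarith, ?_⟩
  intro n
  by_cases hn : n < N₀
  · have hle' : Rf n ≤ R + ∑ k ∈ Finset.range N₀, max (Rf k) 0 := by
      calc Rf n ≤ max (Rf n) 0 := le_max_left _ _
        _ ≤ ∑ k ∈ Finset.range N₀, max (Rf k) 0 :=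
            Finset.single_le_sum (f := fun k => max (Rf k) 0)
              (fun k _ => le_max_right _ _) (Finset.mem_range.mpr hn)
        _ ≤ _ := le_add_of_nonneg_left (by linarith)
    exact le_trans (measure_mono fun ω hω => lt_of_le_of_lt hle' hω) (hRf n)
  · push_neg at hn
    refine le_trans (measure_mono fun ω hω => ?_) ((hmain n hn).trans hεrle)
    simp only [Set.mem_setOf_eq] at hω ⊢
    linarith

end TightAux
end

/-- If `{Uₙ}` is tight, the coherency condition holds, and `Zₙ` converges in distribution,
then the family `{Vₙ}` is weakly relatively compact (tight), and hence so is the family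
`{Wₙ = (Uₙ, Vₙ)}`. -/
theorem tightness_of_V_and_W
    {Ω : Type*} [MeasurableSpace Ω] (P : Measure Ω) [IsProbabilityMeasure P]
    (m : ℕ)
    (S : ℕ → ℕ → Ω → EuclideanSpace ℝ (Fin m))
    (hSmeas : ∀ n k, Measurable (S n k))
    (a : ℕ → ℕ → EuclideanSpace ℝ (Fin m)) (b : ℕ → ℕ → ℝ) (hb : ∀ n k, 0 < b n k)
    (N : ℕ → Ω → ℕ) (hNmeas : ∀ n, Measurable (N n)) (hNpos : ∀ n ω, 0 < N n ω)
    (hNindep : ∀ n k, IndepFun (N n) (S n k) P)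
    (c : ℕ → EuclideanSpace ℝ (Fin m)) (d : ℕ → ℝ) (hd : ∀ n, 0 < d n)
    (Y : ℕ → ℕ → Ω → EuclideanSpace ℝ (Fin m))
    (hY : ∀ n k ω, Y n k ω = (b n k)⁻¹ • (S n k ω - a n k))
    (Z : ℕ → Ω → EuclideanSpace ℝ (Fin m))
    (hZ : ∀ n ω, Z n ω = (d n)⁻¹ • (S n (N n ω) ω - c n))
    (U : ℕ → Ω → ℝ) (hU : ∀ n ω, U n ω = (d n)⁻¹ * b n (N n ω))
    (V : ℕ → Ω → EuclideanSpace ℝ (Fin m))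
    (hV : ∀ n ω, V n ω = (d n)⁻¹ • (a n (N n ω) - c n))
    (Ylim : Ω → EuclideanSpace ℝ (Fin m)) (hYlim : Measurable Ylim)
    (h : EuclideanSpace ℝ (Fin m) → ℂ) (hh : ∀ t, h t = charFn P Ylim t)
    -- tightness (weak relative compactness) of the family {U_n}
    (htight : Tendsto (fun R : ℝ => ⨆ n, P {ω | R < |U n ω|}) atTop (𝓝 0))
    -- coherency condition
    (hcoh : ∀ T : ℝ, 0 < T →
      Tendsto (fun n => ∫ ω,
          ⨆ t ∈ Metric.closedBall (0 : EuclideanSpace ℝ (Fin m)) T,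
            ‖charFn P (Y n (N n ω)) t - h t‖ ∂P)
        atTop (𝓝 0))
    -- Z_n converges in distribution to some random vector Z
    (Zlim : Ω → EuclideanSpace ℝ (Fin m)) (hZlim : Measurable Zlim)
    (hZconv : ∀ f : BoundedContinuousFunction (EuclideanSpace ℝ (Fin m)) ℝ,
      Tendsto (fun n => ∫ ω, f (Z n ω) ∂P) atTop (𝓝 (∫ ω, f (Zlim ω) ∂P))) :
    -- conclusion: {V_n} is tight and hence {W_n = (U_n, V_n)} is tight
    Tendsto (fun R : ℝ => ⨆ n, P {ω | R < ‖V n ω‖}) atTop (𝓝 0) ∧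
    Tendsto (fun R : ℝ => ⨆ n, P {ω | R < ‖(U n ω, V n ω)‖}) atTop (𝓝 0) := by
    classical
  -- basic measurability facts
  have hYmeas : ∀ n k, Measurable (Y n k) := by
    intro n k
    have : Y n k = (fun x => (b n k)⁻¹ • (x - a n k)) ∘ S n k := funext (hY n k)
    rw [this]
    exact (((continuous_id.sub continuous_const).const_smul
      ((b n k)⁻¹)).measurable).comp (hSmeas n k)
  have hSc : ∀ n, Measurable fun ω => S n (N n ω) ω := by
    intro n
    have h1 : Measurable fun p : Ω × ℕ => S n p.2 p.1 :=
      measurable_from_prod_countable_left fun k => hSmeas n k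
    exact h1.comp (measurable_id.prodMk (hNmeas n))
  have hZmeas : ∀ n, Measurable (Z n) := by
    intro n
    have : Z n = (fun x => (d n)⁻¹ • (x - c n)) ∘ fun ω => S n (N n ω) ω := funext (hZ n)
    rw [this]
    exact (((continuous_id.sub continuous_const).const_smul
      ((d n)⁻¹)).measurable).comp (hSc n)
  -- independence transferred to Y
  have hYind : ∀ n k (B : Set (EuclideanSpace ℝ (Fin m))), MeasurableSet B →
      P ((N n) ⁻¹' {k} ∩ (Y n k) ⁻¹' B) = P ((N n) ⁻¹' {k}) * P ((Y n k) ⁻¹' B) := by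
    intro n k B hB
    have hg : Measurable (fun x : EuclideanSpace ℝ (Fin m) => (b n k)⁻¹ • (x - a n k)) :=
      ((continuous_id.sub continuous_const).const_smul ((b n k)⁻¹)).measurable
    have hpre : (Y n k) ⁻¹' B
        = (S n k) ⁻¹' ((fun x => (b n k)⁻¹ • (x - a n k)) ⁻¹' B) := by
      rw [show Y n k = (fun x => (b n k)⁻¹ • (x - a n k)) ∘ S n k from funext (hY n k),
        Set.preimage_comp]
    rw [hpre]
    exact (hNindep n k).measure_inter_preimage_eq_mul _ _
      (measurableSet_singleton k) (hg hB)
  -- algebraic identity V = Z - U • Y_{n, N_n}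
  have hVZ : ∀ n ω, V n ω = Z n ω - U n ω • Y n (N n ω) ω := by
    intro n ω
    rw [hV, hZ, hU, hY]
    have hbne : b n (N n ω) ≠ 0 := (hb n (N n ω)).ne'
    rw [smul_smul, mul_assoc, mul_inv_cancel₀ hbne, mul_one, ← smul_sub]
    congr 1
    abel
  -- epsilon-forms of the tightness statements
  have TU : ∀ ε : ENNReal, 0 < ε → ∃ R₀ : ℝ, 0 < R₀ ∧
      ∀ n, P {ω | R₀ < |U n ω|} ≤ ε := by
    intro ε hε
    obtain ⟨R₀, hR₀, hpos⟩ :=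
      ((ENNReal.tendsto_nhds_zero.mp htight ε hε).and (eventually_gt_atTop 0)).exists
    exact ⟨R₀, hpos, fun n =>
      le_trans (le_iSup (fun n => P {ω | R₀ < |U n ω|}) n) hR₀⟩
  have TZ := TightAux.tight_of_distribution_conv P hZmeas hZlim hZconv
  have TY := TightAux.TY_tight P hYmeas hNmeas hYind hYlim h hh hcoh
  -- tightness of V in epsilon form
  have TV : ∀ ε : ENNReal, 0 < ε → ∃ R₀ : ℝ, 0 < R₀ ∧
      ∀ n, P {ω | R₀ < ‖V n ω‖} ≤ ε := by
    intro ε hε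
    have hε2 : (0:ENNReal) < ε/2 := ENNReal.half_pos hε.ne'
    have hε4 : (0:ENNReal) < ε/2/2 := ENNReal.half_pos hε2.ne'
    obtain ⟨RZ, hRZpos, hRZ⟩ := TZ (ε/2) hε2
    obtain ⟨RU, hRUpos, hRU⟩ := TU (ε/2/2) hε4
    obtain ⟨RY, hRYpos, hRY⟩ := TY (ε/2/2) hε4
    refine ⟨RZ + RU * RY, by positivity, fun n => ?_⟩
    have hsub : {ω | RZ + RU * RY < ‖V n ω‖}
        ⊆ {ω | RZ < ‖Z n ω‖} ∪ ({ω | RU < |U n ω|} ∪ {ω | RY < ‖Y n (N n ω) ω‖}) := by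
      intro ω hω
      by_contra hcon
      simp only [Set.mem_union, Set.mem_setOf_eq, not_or, not_lt] at hcon
      obtain ⟨h1, h2, h3⟩ := hcon
      have hnorm : ‖V n ω‖ ≤ ‖Z n ω‖ + |U n ω| * ‖Y n (N n ω) ω‖ := by
        rw [hVZ n ω]
        calc ‖Z n ω - U n ω • Y n (N n ω) ω‖
            ≤ ‖Z n ω‖ + ‖U n ω • Y n (N n ω) ω‖ := norm_sub_le _ _
          _ = ‖Z n ω‖ + |U n ω| * ‖Y n (N n ω) ω‖ := by
              rw [norm_smul, Real.norm_eq_abs]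
      have hmul : |U n ω| * ‖Y n (N n ω) ω‖ ≤ RU * RY :=
        mul_le_mul h2 h3 (norm_nonneg _) hRUpos.le
      have hω' : RZ + RU * RY < ‖V n ω‖ := hω
      linarith
    calc P {ω | RZ + RU * RY < ‖V n ω‖}
        ≤ P ({ω | RZ < ‖Z n ω‖} ∪ ({ω | RU < |U n ω|} ∪ {ω | RY < ‖Y n (N n ω) ω‖})) :=
          measure_mono hsub
      _ ≤ P {ω | RZ < ‖Z n ω‖}
            + P ({ω | RU < |U n ω|} ∪ {ω | RY < ‖Y n (N n ω) ω‖}) := measure_union_le _ _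
      _ ≤ P {ω | RZ < ‖Z n ω‖}
            + (P {ω | RU < |U n ω|} + P {ω | RY < ‖Y n (N n ω) ω‖}) :=
          add_le_add le_rfl (measure_union_le _ _)
      _ ≤ ε/2 + (ε/2/2 + ε/2/2) := add_le_add (hRZ n) (add_le_add (hRU n) (hRY n))
      _ = ε := by rw [ENNReal.add_halves, ENNReal.add_halves]
  -- tightness of W in epsilon form
  have TW : ∀ ε : ENNReal, 0 < ε → ∃ R₀ : ℝ,
      ∀ n, P {ω | R₀ < ‖(U n ω, V n ω)‖} ≤ ε := by
    intro ε hε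
    have hε2 : (0:ENNReal) < ε/2 := ENNReal.half_pos hε.ne'
    obtain ⟨RU, hRUpos, hRU⟩ := TU (ε/2) hε2
    obtain ⟨RV, hRVpos, hRV⟩ := TV (ε/2) hε2
    refine ⟨max RU RV, fun n => ?_⟩
    have hsub : {ω | max RU RV < ‖(U n ω, V n ω)‖}
        ⊆ {ω | RU < |U n ω|} ∪ {ω | RV < ‖V n ω‖} := by
      intro ω hω
      have hω' : max RU RV < ‖(U n ω, V n ω)‖ := hω
      rw [Prod.norm_def] at hω'
      rcases lt_max_iff.mp hω' with h1 | h2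
      · left
        have : RU < ‖U n ω‖ := lt_of_le_of_lt (le_max_left _ _) h1
        rwa [Real.norm_eq_abs] at this
      · right
        exact lt_of_le_of_lt (le_max_right _ _) h2
    calc P {ω | max RU RV < ‖(U n ω, V n ω)‖}
        ≤ P ({ω | RU < |U n ω|} ∪ {ω | RV < ‖V n ω‖}) := measure_mono hsub
      _ ≤ P {ω | RU < |U n ω|} + P {ω | RV < ‖V n ω‖} := measure_union_le _ _
      _ ≤ ε/2 + ε/2 := add_le_add (hRU n) (hRV n)
      _ = ε := ENNReal.add_halves ε
  constructor
  · exact TightAux.tight_of_eps P _ (fun ε hε => (TV ε hε).imp fun R₀ hR₀ => hR₀.2)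
  · exact TightAux.tight_of_eps P _ TW
end
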